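/- arXiv:2303.04493 — 4 statements merged into one kernel-verified Lean document; each statement's English description precedes it below -/
import Mathlib

section
/- For any finite group G with normalized 3-cocycle ω valued in k^× and any subgroup H ≤ G, the induction functor I : Z(Vect_H^ω) → Z(Vect_G^ω), equipped with the lax structure μ_{V,W}((g⊗v_d)⊗(g⊗w_f)) = γ(g)(d,f)⁻¹ g⊗(v_d⊗w_f) (zero on (g⊗v)⊗(k⊗w) when g⁻¹k ∉ H), unit 1 ↦ Σ_i g_i⊗1 over coset representatives, oplax structure ν_{V,W}(g⊗(v_d⊗w_f)) = γ(g)(d,f)·(g⊗v_d)⊗(g⊗w_f) and counit g⊗1 ↦ 1, is a separable Frobenius monoidal functor: the two Frobenius compatibility conditions hold, and μ_{V,W}∘ν_{V,W} = id_{I(V⊗W)} for all V, W. -/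
open scoped TensorProduct

namespace DW

/-! ### Cocycle combinatorics -/

section Cocycle

variable {G : Type*} [Group G] {M : Type*} [CommGroup M]

/-- The 3-cocycle condition for a function `ω : G³ → M`. -/
def IsCocycle (ω : G → G → G → M) : Prop :=
  ∀ a b c d : G, ω (a * b) c d * ω a b (c * d) = ω a b c * ω a (b * c) d * ω b c d

/-- `ω` is normalized if it takes the value `1` whenever an argument is `1`. -/
def IsNormalized (ω : G → G → G → M) : Prop :=
  ∀ a b c : G, a = 1 ∨ b = 1 ∨ c = 1 → ω a b c = 1

/-- `τ(h,k)(d) = ω(h,k,d)·ω(hkd(hk)⁻¹,h,k)/ω(h,kdk⁻¹,k)`. -/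
def tauc (ω : G → G → G → M) (h k d : G) : M :=
  ω h k d * ω (h * k * d * (h * k)⁻¹) h k * (ω h (k * d * k⁻¹) k)⁻¹

/-- `γ(h)(d,f) = ω(h,d,f)·ω(hdh⁻¹,hfh⁻¹,h)/ω(hdh⁻¹,h,f)`. -/
def gamc (ω : G → G → G → M) (h d f : G) : M :=
  ω h d f * ω (h * d * h⁻¹) (h * f * h⁻¹) h * (ω (h * d * h⁻¹) h f)⁻¹

end Cocycle

/-! ### Twisted Yetter–Drinfeld modules -/

/-- A twisted Yetter–Drinfeld module structure over `(G, ω)` on a `k`-vector space `M`: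
a `G`-grading (given internally by submodules) together with a twisted `G`-action. -/
structure YDOn (k : Type*) [Field k] {G : Type*} [Group G] [DecidableEq G]
    (ω : G → G → G → kˣ) (M : Type*) [AddCommGroup M] [Module k M] where
  grading : G → Submodule k M
  internal : DirectSum.IsInternal grading
  act : G → M →ₗ[k] M
  act_one : act 1 = LinearMap.id
  act_mem : ∀ (g d : G), ∀ v ∈ grading d, act g v ∈ grading (g * d * g⁻¹)
  act_act : ∀ (h g d : G), ∀ v ∈ grading d,
    act h (act g v) = ((tauc ω h g d : kˣ) : k) • act (h * g) v

section YD

variable {k : Type*} [Field k] {G : Type*} [Group G] [DecidableEq G] {ω : G → G → G → kˣ}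

/-- Morphisms of twisted Yetter–Drinfeld modules: grading-preserving and `G`-equivariant. -/
def IsYDHom {M N : Type*} [AddCommGroup M] [Module k M] [AddCommGroup N] [Module k N]
    (S : YDOn k ω M) (T : YDOn k ω N) (f : M →ₗ[k] N) : Prop :=
  (∀ d : G, ∀ v ∈ S.grading d, f v ∈ T.grading d) ∧
  ∀ g : G, f ∘ₗ S.act g = T.act g ∘ₗ f

/-- `θ` is the ribbon twist map, i.e. `θ(v_d) = d·v_d` on homogeneous elements. -/
def IsTwistMap {M : Type*} [AddCommGroup M] [Module k M] (S : YDOn k ω M)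
    (θ : M →ₗ[k] M) : Prop :=
  ∀ d : G, ∀ v ∈ S.grading d, θ v = S.act d v

/-- `T` is the tensor-product Yetter–Drinfeld structure on `V ⊗ W`:
grading `(V⊗W)_d = ⊕_{ab=d} V_a ⊗ W_b`, action `h·(v_a⊗w_b) = γ(h)(a,b) (h·v ⊗ h·w)`. -/
def IsTensorStruct {V W : Type*} [AddCommGroup V] [Module k V] [AddCommGroup W] [Module k W]
    (SV : YDOn k ω V) (SW : YDOn k ω W) (T : YDOn k ω (V ⊗[k] W)) : Prop :=
  (∀ d : G, T.grading d =
      ⨆ a : G, Submodule.map₂ (TensorProduct.mk k V W) (SV.grading a) (SW.grading (a⁻¹ * d))) ∧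
  ∀ (h a b : G) (v : V) (w : W), v ∈ SV.grading a → w ∈ SW.grading b →
    T.act h (v ⊗ₜ[k] w) = ((gamc ω h a b : kˣ) : k) • (SV.act h v ⊗ₜ[k] SW.act h w)

/-- `c` is the braiding `c_{V,W}(v_g ⊗ w) = (g·w) ⊗ v_g`. -/
def IsBraidingMap {V W : Type*} [AddCommGroup V] [Module k V] [AddCommGroup W] [Module k W]
    (SV : YDOn k ω V) (SW : YDOn k ω W) (c : V ⊗[k] W →ₗ[k] W ⊗[k] V) : Prop :=
  ∀ (g : G) (v : V) (w : W), v ∈ SV.grading g → c (v ⊗ₜ[k] w) = SW.act g w ⊗ₜ[k] v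

/-- `a` is the associator `α((u_g⊗v_h)⊗w_l) = ω(g,h,l)⁻¹ u⊗(v⊗w)`. -/
def IsAssocMap {U V W : Type*} [AddCommGroup U] [Module k U] [AddCommGroup V] [Module k V]
    [AddCommGroup W] [Module k W]
    (SU : YDOn k ω U) (SV : YDOn k ω V) (SW : YDOn k ω W)
    (a : (U ⊗[k] V) ⊗[k] W →ₗ[k] U ⊗[k] (V ⊗[k] W)) : Prop :=
  ∀ (g h l : G) (u : U) (v : V) (w : W),
    u ∈ SU.grading g → v ∈ SV.grading h → w ∈ SW.grading l →
    a ((u ⊗ₜ[k] v) ⊗ₜ[k] w) = (((ω g h l)⁻¹ : kˣ) : k) • (u ⊗ₜ[k] (v ⊗ₜ[k] w))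

/-- `a` is the inverse associator `α⁻¹(u_g⊗(v_h⊗w_l)) = ω(g,h,l) (u⊗v)⊗w`. -/
def IsAssocInvMap {U V W : Type*} [AddCommGroup U] [Module k U] [AddCommGroup V] [Module k V]
    [AddCommGroup W] [Module k W]
    (SU : YDOn k ω U) (SV : YDOn k ω V) (SW : YDOn k ω W)
    (a : U ⊗[k] (V ⊗[k] W) →ₗ[k] (U ⊗[k] V) ⊗[k] W) : Prop :=
  ∀ (g h l : G) (u : U) (v : V) (w : W),
    u ∈ SU.grading g → v ∈ SV.grading h → w ∈ SW.grading l →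
    a (u ⊗ₜ[k] (v ⊗ₜ[k] w)) = ((ω g h l : kˣ) : k) • ((u ⊗ₜ[k] v) ⊗ₜ[k] w)

/-- The unit object: `k` concentrated in degree `1` with trivial action. -/
def IsUnitStruct (S : YDOn k ω k) : Prop :=
  S.grading 1 = ⊤ ∧ (∀ d : G, d ≠ 1 → S.grading d = ⊥) ∧ ∀ g : G, S.act g = LinearMap.id

end YD

/-! ### The induction functor -/

section Induced

variable {k : Type*} [Field k] {G : Type*} [Group G] [DecidableEq G]
variable (ω : G → G → G → kˣ) (H : Subgroup G)

/-- Restriction of a 3-cocycle on `G` to a subgroup `H`. -/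
def resCocycle : ↥H → ↥H → ↥H → kˣ := fun a b c => ω ↑a ↑b ↑c

variable {V : Type*} [AddCommGroup V] [Module k V]

/-- The relations `g h ⊗ v_d = τ(g,h)(d)⁻¹ g ⊗ (h·v_d)` defining `I(V) = kG ⊗_{kH} V`. -/
noncomputable def indRel (S : YDOn k (resCocycle ω H) V) : Submodule k (G →₀ V) :=
  Submodule.span k
    {x | ∃ (g : G) (h d : ↥H) (v : V), v ∈ S.grading d ∧
      x = Finsupp.single (g * ↑h) v
        - (((tauc ω g ↑h ↑d)⁻¹ : kˣ) : k) • Finsupp.single g (S.act h v)}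

/-- The carrier of the induced module `I(V)`. -/
abbrev IndCarrier (S : YDOn k (resCocycle ω H) V) : Type _ :=
  (G →₀ V) ⧸ indRel ω H S

/-- The generator `g ⊗ v` of `I(V)`. -/
noncomputable def jgen (S : YDOn k (resCocycle ω H) V) (g : G) (v : V) : IndCarrier ω H S :=
  Submodule.Quotient.mk (Finsupp.single g v)

/-- `T` is the twisted Yetter–Drinfeld structure of the induced module `I(V)`:
`deg (g⊗v_e) = g e g⁻¹` and `c ⊳ (g⊗v_e) = τ(c,g)(e) (cg ⊗ v_e)`. -/
def IsIndStruct (S : YDOn k (resCocycle ω H) V) (T : YDOn k ω (IndCarrier ω H S)) : Prop :=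
  (∀ d : G, T.grading d = Submodule.span k
      {x | ∃ (g : G) (e : ↥H) (v : V), v ∈ S.grading e ∧ g * ↑e * g⁻¹ = d ∧
        x = jgen ω H S g v}) ∧
  ∀ (c g : G) (e : ↥H) (v : V), v ∈ S.grading e →
    T.act c (jgen ω H S g v) = ((tauc ω c g ↑e : kˣ) : k) • jgen ω H S (c * g) v

/-- `F` is the induced morphism `I(f)` of a morphism `f`. -/
def IsIndMap {W : Type*} [AddCommGroup W] [Module k W]
    (S : YDOn k (resCocycle ω H) V) (S' : YDOn k (resCocycle ω H) W)
    (f : V →ₗ[k] W) (F : IndCarrier ω H S →ₗ[k] IndCarrier ω H S') : Prop :=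
  ∀ (g : G) (v : V), F (jgen ω H S g v) = jgen ω H S' g (f v)

/-- `ν` is the oplax structure map
`ν(g ⊗ (a_d ⊗ b_f)) = γ(g)(d,f) (g⊗a) ⊗ (g⊗b)`. -/
def IsNuMap {A B : Type*} [AddCommGroup A] [Module k A] [AddCommGroup B] [Module k B]
    (SA : YDOn k (resCocycle ω H) A) (SB : YDOn k (resCocycle ω H) B)
    (SAB : YDOn k (resCocycle ω H) (A ⊗[k] B))
    (ν : IndCarrier ω H SAB →ₗ[k] IndCarrier ω H SA ⊗[k] IndCarrier ω H SB) : Prop :=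
  ∀ (g : G) (d f : ↥H) (a : A) (b : B), a ∈ SA.grading d → b ∈ SB.grading f →
    ν (jgen ω H SAB g (a ⊗ₜ[k] b)) =
      ((gamc ω g ↑d ↑f : kˣ) : k) • (jgen ω H SA g a ⊗ₜ[k] jgen ω H SB g b)

/-- `μ` is the lax structure map: zero across distinct cosets and
`μ((g⊗a_d) ⊗ (g⊗b_f)) = γ(g)(d,f)⁻¹ (g ⊗ (a⊗b))`. -/
def IsMuMap {A B : Type*} [AddCommGroup A] [Module k A] [AddCommGroup B] [Module k B]
    (SA : YDOn k (resCocycle ω H) A) (SB : YDOn k (resCocycle ω H) B)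
    (SAB : YDOn k (resCocycle ω H) (A ⊗[k] B))
    (μ : IndCarrier ω H SA ⊗[k] IndCarrier ω H SB →ₗ[k] IndCarrier ω H SAB) : Prop :=
  (∀ g g' : G, g⁻¹ * g' ∉ H → ∀ (a : A) (b : B),
      μ (jgen ω H SA g a ⊗ₜ[k] jgen ω H SB g' b) = 0) ∧
  ∀ (g : G) (d f : ↥H) (a : A) (b : B), a ∈ SA.grading d → b ∈ SB.grading f →
    μ (jgen ω H SA g a ⊗ₜ[k] jgen ω H SB g b) =
      (((gamc ω g ↑d ↑f)⁻¹ : kˣ) : k) • jgen ω H SAB g (a ⊗ₜ[k] b)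

/-- The counit `I(1) → 1`, `g ⊗ c ↦ c`. -/
def IsCounitMap (S1 : YDOn k (resCocycle ω H) k)
    (ε : IndCarrier ω H S1 →ₗ[k] k) : Prop :=
  ∀ (g : G) (c : k), ε (jgen ω H S1 g c) = c

/-- The unit `1 → I(1)`, `1 ↦ ∑ᵢ gᵢ ⊗ 1` over a set `R` of left coset representatives. -/
def IsUnitMap (S1 : YDOn k (resCocycle ω H) k) (R : Finset G)
    (η : k →ₗ[k] IndCarrier ω H S1) : Prop :=
  (∀ g : G, ∃! r, r ∈ R ∧ g⁻¹ * r ∈ H) ∧ η 1 = ∑ r ∈ R, jgen ω H S1 r (1 : k)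

end Induced

/-! ### The coset algebra and classification data -/

section AH

variable (k : Type*) [Field k] {G : Type*} [Group G]

/-- The twisted action of `G` on functions on `G/H` : `(c·f)(x) = f(c⁻¹x)`. -/
def cosetAct (H : Subgroup G) (c : G) : ((G ⧸ H) → k) →ₗ[k] ((G ⧸ H) → k) :=
  LinearMap.funLeft k k fun x => c⁻¹ • x

/-- Basis element `e_n` of the twisted group algebra `B(N,κ,ε)`. -/
noncomputable def bGen {H : Type*} [Group H] (N : Subgroup H) (n : ↥N) : ↥N →₀ k :=
  Finsupp.single n 1

end AH

section ClassData

variable {H : Type*} [Group H] {M : Type*} [CommGroup M]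

/-- The conditions on the classification data `(N, κ, ε)` from Davydov–Simmons. -/
def ClassData (ω : H → H → H → M) (N : Subgroup H) (κ ε : H → H → M) : Prop :=
  (∀ n ∈ N, κ n 1 = 1 ∧ κ 1 n = 1) ∧
  (∀ n ∈ N, ∀ m ∈ N, ∀ l ∈ N,
      ω n m l = κ n m * (κ m l)⁻¹ * κ (n * m) l * (κ n (m * l))⁻¹) ∧
  (∀ h g : H, ∀ n ∈ N, tauc ω h g n = ε h (g * n * g⁻¹) * ε g n * (ε (h * g) n)⁻¹) ∧
  (∀ h : H, ∀ n ∈ N, ∀ m ∈ N,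
      gamc ω h n m
        = ε h (n * m) * (ε h n)⁻¹ * (ε h m)⁻¹ * κ (h * n * h⁻¹) (h * m * h⁻¹) * (κ n m)⁻¹) ∧
  ∀ n ∈ N, ∀ m ∈ N, κ (n * m * n⁻¹) n = ε n m * κ n m

end ClassData

section BStruct

variable {k : Type*} [Field k] {H : Type*} [Group H] [DecidableEq H]

/-- The twisted Yetter–Drinfeld structure of `B(N,κ,ε)`:
`e_n` has degree `n` and `h·e_n = ε_h(n) e_{hnh⁻¹}`. -/
def IsBStruct (ω : H → H → H → kˣ) (N : Subgroup H) (hN : N.Normal) (ε : H → H → kˣ)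
    (S : YDOn k ω (↥N →₀ k)) : Prop :=
  (∀ d : H, S.grading d = Submodule.span k {x | ∃ n : ↥N, ↑n = d ∧ x = bGen k N n}) ∧
  ∀ (h : H) (n : ↥N), S.act h (bGen k N n) =
    ((ε h ↑n : kˣ) : k) • bGen k N ⟨h * ↑n * h⁻¹, hN.conj_mem ↑n n.2 h⟩

/-- The multiplication of `B(N,κ,ε)`: `e_n e_m = κ(n,m)⁻¹ e_{nm}`. -/
def IsBMul (N : Subgroup H) (κ : H → H → kˣ)
    (mulB : (↥N →₀ k) ⊗[k] (↥N →₀ k) →ₗ[k] (↥N →₀ k)) : Prop :=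
  ∀ n m : ↥N, mulB (bGen k N n ⊗ₜ[k] bGen k N m) =
    (((κ ↑n ↑m)⁻¹ : kˣ) : k) • bGen k N (n * m)

end BStruct

/-! ### Algebras, étale algebras and Frobenius algebras in the category -/

section Algebras

variable {k : Type*} [Field k] {G : Type*} [Group G] [DecidableEq G] {ω : G → G → G → kˣ}
variable {M : Type*} [AddCommGroup M] [Module k M]

/-- `(M, mulM, uM)` is a connected étale (= connected commutative separable) algebra in
`Z(Vect_G^ω)`. -/
def IsConnectedEtale (T : YDOn k ω M) (mulM : M ⊗[k] M →ₗ[k] M) (uM : k →ₗ[k] M) : Prop :=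
  -- the multiplication is a morphism in the category
  (∃ Tt : YDOn k ω (M ⊗[k] M), IsTensorStruct T T Tt ∧ IsYDHom Tt T mulM) ∧
  -- the unit is a morphism in the category
  (uM 1 ∈ T.grading 1) ∧ (∀ g : G, T.act g (uM 1) = uM 1) ∧
  -- unitality
  (∀ x : M, mulM (uM 1 ⊗ₜ[k] x) = x ∧ mulM (x ⊗ₜ[k] uM 1) = x) ∧
  -- associativity (with respect to the associator of the category)
  (∃ a, IsAssocMap T T T a ∧
      mulM ∘ₗ TensorProduct.map mulM LinearMap.id
        = mulM ∘ₗ TensorProduct.map LinearMap.id mulM ∘ₗ a) ∧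
  -- commutativity
  (∃ c, IsBraidingMap T T c ∧ mulM ∘ₗ c = mulM) ∧
  -- separability
  (∃ (Δ' : M →ₗ[k] M ⊗[k] M) (Tt : YDOn k ω (M ⊗[k] M))
      (a : (M ⊗[k] M) ⊗[k] M →ₗ[k] M ⊗[k] (M ⊗[k] M))
      (a' : M ⊗[k] (M ⊗[k] M) →ₗ[k] (M ⊗[k] M) ⊗[k] M),
      IsTensorStruct T T Tt ∧ IsAssocMap T T T a ∧ IsAssocInvMap T T T a' ∧
      IsYDHom T Tt Δ' ∧ mulM ∘ₗ Δ' = LinearMap.id ∧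
      TensorProduct.map LinearMap.id mulM ∘ₗ a ∘ₗ TensorProduct.map Δ' LinearMap.id
        = Δ' ∘ₗ mulM ∧
      Δ' ∘ₗ mulM
        = TensorProduct.map mulM LinearMap.id ∘ₗ a' ∘ₗ TensorProduct.map LinearMap.id Δ') ∧
  -- connectedness : Hom(1, M) is one-dimensional
  Module.finrank k
    ↥(T.grading 1 ⊓ ⨅ g : G, LinearMap.eqLocus (T.act g) (LinearMap.id : M →ₗ[k] M)) = 1

/-- `(M, mulM, uM)` is a rigid Frobenius (= connected commutative special Frobenius)
algebra in `Z(Vect_G^ω)`. -/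
def IsRigidFrobenius (T : YDOn k ω M) (mulM : M ⊗[k] M →ₗ[k] M) (uM : k →ₗ[k] M) : Prop :=
  IsConnectedEtale T mulM uM ∧
  ∃ (Δ : M →ₗ[k] M ⊗[k] M) (εM : M →ₗ[k] k),
    -- Δ and ε are morphisms in the category
    (∃ Tt : YDOn k ω (M ⊗[k] M), IsTensorStruct T T Tt ∧ IsYDHom T Tt Δ) ∧
    (∀ g : G, εM ∘ₗ T.act g = εM) ∧ (∀ d : G, d ≠ 1 → ∀ v ∈ T.grading d, εM v = 0) ∧
    -- coassociativity and counitality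
    (∀ a, IsAssocMap T T T a →
        a ∘ₗ TensorProduct.map Δ LinearMap.id ∘ₗ Δ = TensorProduct.map LinearMap.id Δ ∘ₗ Δ) ∧
    (TensorProduct.lid k M).toLinearMap ∘ₗ TensorProduct.map εM LinearMap.id ∘ₗ Δ
      = LinearMap.id ∧
    (TensorProduct.rid k M).toLinearMap ∘ₗ TensorProduct.map LinearMap.id εM ∘ₗ Δ
      = LinearMap.id ∧
    -- the Frobenius compatibility
    (∀ a a', IsAssocMap T T T a → IsAssocInvMap T T T a' →
        TensorProduct.map mulM LinearMap.id ∘ₗ a' ∘ₗ TensorProduct.map LinearMap.id Δ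
          = Δ ∘ₗ mulM ∧
        Δ ∘ₗ mulM = TensorProduct.map LinearMap.id mulM ∘ₗ a ∘ₗ TensorProduct.map Δ LinearMap.id) ∧
    -- specialness
    (∃ β : k, β ≠ 0 ∧ mulM ∘ₗ Δ = β • LinearMap.id) ∧
    ∃ β1 : k, β1 ≠ 0 ∧ εM (uM 1) = β1

/-- `(V, ρ)` is a local right module over the commutative algebra `(A, mulA, u)`. -/
def IsLocModule {A V : Type*} [AddCommGroup A] [Module k A] [AddCommGroup V] [Module k V]
    (SA : YDOn k ω A) (mulA : A ⊗[k] A →ₗ[k] A) (u : A)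
    (SV : YDOn k ω V) (ρ : V →ₗ[k] A →ₗ[k] V) : Prop :=
  (∀ d e : G, ∀ v ∈ SV.grading d, ∀ a ∈ SA.grading e, ρ v a ∈ SV.grading (d * e)) ∧
  (∀ v : V, ρ v u = v) ∧
  (∀ (d e f : G) (v : V) (a b : A), v ∈ SV.grading d → a ∈ SA.grading e → b ∈ SA.grading f →
      ρ (ρ v a) b = (((ω d e f)⁻¹ : kˣ) : k) • ρ v (mulA (a ⊗ₜ[k] b))) ∧
  (∀ (h d e : G) (v : V) (a : A), v ∈ SV.grading d → a ∈ SA.grading e →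
      SV.act h (ρ v a) = ((gamc ω h d e : kˣ) : k) • ρ (SV.act h v) (SA.act h a)) ∧
  ∀ (d e : G) (v : V) (a : A), v ∈ SV.grading d → a ∈ SA.grading e →
    ρ v a = ρ (SV.act (d * e * d⁻¹) v) (SA.act d a)

/-- The submodule of `X ⊗ Y` which is divided out to form the relative tensor product
`X ⊗_A Y` over a commutative algebra `A` (the left action on `Y` is obtained from the
right action through the braiding). -/
def relLoc {A X Y : Type*} [AddCommGroup A] [Module k A] [AddCommGroup X] [Module k X]
    [AddCommGroup Y] [Module k Y]
    (SA : YDOn k ω A) (SY : YDOn k ω Y)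
    (ρX : X →ₗ[k] A →ₗ[k] X) (ρY : Y →ₗ[k] A →ₗ[k] Y) : Submodule k (X ⊗[k] Y) :=
  Submodule.span k
    {t | ∃ (e : G) (a : A) (x : X) (y : Y), a ∈ SA.grading e ∧
      t = ρX x a ⊗ₜ[k] y - x ⊗ₜ[k] ρY (SY.act e y) a}

end Algebras

end DW

open DW

section Helpers

variable {k : Type*} [Field k] {G : Type*} [Group G] [DecidableEq G]

lemma omega_key (ω : G → G → G → kˣ) (hω : IsCocycle ω) (g d e f : G) :
    ((ω g d e : kˣ) : k) * ((ω (g*d*g⁻¹) (g*e*g⁻¹) g : kˣ) : k) * ((ω g (d*e) f : kˣ) : k)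
      * ((ω (g*(d*e)*g⁻¹) (g*f*g⁻¹) g : kˣ) : k) * ((ω d e f : kˣ) : k)
      * ((ω (g*d*g⁻¹) g (e*f) : kˣ) : k) * ((ω (g*e*g⁻¹) g f : kˣ) : k)
    = ((ω g d (e*f) : kˣ) : k) * ((ω (g*d*g⁻¹) (g*(e*f)*g⁻¹) g : kˣ) : k)
      * ((ω g e f : kˣ) : k) * ((ω (g*e*g⁻¹) (g*f*g⁻¹) g : kˣ) : k)
      * ((ω (g*d*g⁻¹) (g*e*g⁻¹) (g*f*g⁻¹) : kˣ) : k) * ((ω (g*d*g⁻¹) g e : kˣ) : k)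
      * ((ω (g*(d*e)*g⁻¹) g f : kˣ) : k) := by
  have c1 := congrArg (Units.val (α := k)) (hω g d e f)
  have c2 := congrArg (Units.val (α := k)) (hω (g * d * g⁻¹) g e f)
  have c3 := congrArg (Units.val (α := k)) (hω (g * d * g⁻¹) (g * e * g⁻¹) g f)
  have c4 := congrArg (Units.val (α := k)) (hω (g * d * g⁻¹) (g * e * g⁻¹) (g * f * g⁻¹) g)
  rw [show g * d * g⁻¹ * g = g * d by group] at c2
  rw [show g * d * g⁻¹ * (g * e * g⁻¹) = g * (d * e) * g⁻¹ by group,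
    show g * e * g⁻¹ * g = g * e by group] at c3
  rw [show g * d * g⁻¹ * (g * e * g⁻¹) = g * (d * e) * g⁻¹ by group,
    show g * e * g⁻¹ * (g * f * g⁻¹) = g * (e * f) * g⁻¹ by group,
    show g * f * g⁻¹ * g = g * f by group] at c4
  simp only [Units.val_mul] at c1 c2 c3 c4
  set x1 : k := ((ω g d e : kˣ) : k)
  set x2 : k := ((ω (g*d*g⁻¹) (g*e*g⁻¹) g : kˣ) : k)
  set x3 : k := ((ω g (d*e) f : kˣ) : k)
  set x4 : k := ((ω (g*(d*e)*g⁻¹) (g*f*g⁻¹) g : kˣ) : k)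
  set x5 : k := ((ω d e f : kˣ) : k)
  set x6 : k := ((ω (g*d*g⁻¹) g (e*f) : kˣ) : k)
  set x7 : k := ((ω (g*e*g⁻¹) g f : kˣ) : k)
  set y1 : k := ((ω g d (e*f) : kˣ) : k)
  set y2 : k := ((ω (g*d*g⁻¹) (g*(e*f)*g⁻¹) g : kˣ) : k)
  set y3 : k := ((ω g e f : kˣ) : k)
  set y4 : k := ((ω (g*e*g⁻¹) (g*f*g⁻¹) g : kˣ) : k)
  set y5 : k := ((ω (g*d*g⁻¹) (g*e*g⁻¹) (g*f*g⁻¹) : kˣ) : k)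
  set y6 : k := ((ω (g*d*g⁻¹) g e : kˣ) : k)
  set y7 : k := ((ω (g*(d*e)*g⁻¹) g f : kˣ) : k)
  set s1 : k := ((ω (g*d) e f : kˣ) : k)
  set s2 : k := ((ω (g*d*g⁻¹) (g*e) f : kˣ) : k)
  set s3 : k := ((ω (g*d*g⁻¹) (g*e*g⁻¹) (g*f) : kˣ) : k)
  have hS : s1 * s2 * s3 ≠ 0 :=
    mul_ne_zero (mul_ne_zero (Units.ne_zero _) (Units.ne_zero _)) (Units.ne_zero _)
  refine mul_right_cancel₀ hS ?_
  linear_combination (x4*s3)*(x1*x3*x5)*(x2*s2*x7)*c2 + (y6*s2*y3)*(x1*x3*x5)*(x2*s2*x7)*c4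
    - (y6*s2*y3)*(y5*y2*y4)*(x2*s2*x7)*c1 - (y6*s2*y3)*(y5*y2*y4)*(s1*y1)*c3

lemma key_gamc (ω : G → G → G → kˣ) (hω : IsCocycle ω) (g d e f : G) :
    ((gamc ω g d e : kˣ) : k) * ((gamc ω g (d * e) f : kˣ) : k) * ((ω d e f : kˣ) : k)
      = ((gamc ω g d (e * f) : kˣ) : k) * ((gamc ω g e f : kˣ) : k)
        * ((ω (g * d * g⁻¹) (g * e * g⁻¹) (g * f * g⁻¹) : kˣ) : k) := by
  have key := omega_key ω hω g d e f
  simp only [gamc, Units.val_mul, Units.val_inv_eq_inv_val]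
  have n1 : ((ω (g * d * g⁻¹) g e : kˣ) : k) ≠ 0 := Units.ne_zero _
  have n2 : ((ω (g * (d * e) * g⁻¹) g f : kˣ) : k) ≠ 0 := Units.ne_zero _
  have n3 : ((ω (g * d * g⁻¹) g (e * f) : kˣ) : k) ≠ 0 := Units.ne_zero _
  have n4 : ((ω (g * e * g⁻¹) g f : kˣ) : k) ≠ 0 := Units.ne_zero _
  field_simp
  linear_combination key



section Structural

variable {k : Type*} [Field k] {G : Type*} [Group G] [DecidableEq G]

lemma span_homog {Γ : Type*} [Group Γ] [DecidableEq Γ] {ωΓ : Γ → Γ → Γ → kˣ}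
    {W : Type*} [AddCommGroup W] [Module k W] (S : YDOn k ωΓ W) :
    Submodule.span k {v : W | ∃ d : Γ, v ∈ S.grading d} = ⊤ := by
  rw [eq_top_iff, ← S.internal.submodule_iSup_eq_top]
  refine iSup_le fun d v hv => Submodule.subset_span ⟨d, hv⟩

lemma span_homPT {Γ : Type*} [Group Γ] [DecidableEq Γ] {ωΓ : Γ → Γ → Γ → kˣ}
    {V W : Type*} [AddCommGroup V] [Module k V] [AddCommGroup W] [Module k W]
    (SV : YDOn k ωΓ V) (SW : YDOn k ωΓ W) :
    Submodule.span k {t : V ⊗[k] W | ∃ (d e : Γ) (v : V) (w : W),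
      v ∈ SV.grading d ∧ w ∈ SW.grading e ∧ t = v ⊗ₜ[k] w} = ⊤ := by
  set P := Submodule.span k {t : V ⊗[k] W | ∃ (d e : Γ) (v : V) (w : W),
      v ∈ SV.grading d ∧ w ∈ SW.grading e ∧ t = v ⊗ₜ[k] w} with hP
  have h1 : ∀ (e : Γ) (n : W), n ∈ SW.grading e → ∀ m : V, m ⊗ₜ[k] n ∈ P := by
    intro e n hn m
    have hle : Submodule.span k {v : V | ∃ d : Γ, v ∈ SV.grading d} ≤
        P.comap ((TensorProduct.mk k V W).flip n) := by
      rw [Submodule.span_le]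
      rintro m' ⟨d, hm⟩
      exact Submodule.subset_span ⟨d, e, m', n, hm, hn, rfl⟩
    exact hle (by rw [span_homog SV]; exact Submodule.mem_top)
  have h2 : ∀ (m : V) (n : W), m ⊗ₜ[k] n ∈ P := by
    intro m n
    have hle : Submodule.span k {w : W | ∃ e : Γ, w ∈ SW.grading e} ≤
        P.comap (TensorProduct.mk k V W m) := by
      rw [Submodule.span_le]
      rintro n' ⟨e, hn⟩
      exact h1 e n' hn m
    exact hle (by rw [span_homog SW]; exact Submodule.mem_top)
  rw [eq_top_iff, ← TensorProduct.span_tmul_eq_top k V W, Submodule.span_le]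
  rintro t ⟨m, n, rfl⟩
  exact h2 m n

lemma ext_on_tmul {M N P : Type*} [AddCommGroup M] [Module k M] [AddCommGroup N] [Module k N]
    [AddCommGroup P] [Module k P] {f g : M ⊗[k] N →ₗ[k] P} {sM : Set M} {sN : Set N}
    (hM : Submodule.span k sM = ⊤) (hN : Submodule.span k sN = ⊤)
    (h : ∀ x ∈ sM, ∀ y ∈ sN, f (x ⊗ₜ[k] y) = g (x ⊗ₜ[k] y)) : f = g := by
  have h1 : ∀ x ∈ sM, ∀ y : N, f (x ⊗ₜ[k] y) = g (x ⊗ₜ[k] y) := by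
    intro x hx y
    have hh := LinearMap.ext_on (f := f ∘ₗ TensorProduct.mk k M N x)
      (g := g ∘ₗ TensorProduct.mk k M N x) hN (fun y hy => h x hx y hy)
    exact LinearMap.congr_fun hh y
  apply TensorProduct.ext'
  intro x y
  have hh := LinearMap.ext_on (f := f ∘ₗ (TensorProduct.mk k M N).flip y)
    (g := g ∘ₗ (TensorProduct.mk k M N).flip y) hM (fun x hx => h1 x hx y)
  exact LinearMap.congr_fun hh x

lemma tmul_mem {Γ : Type*} [Group Γ] [DecidableEq Γ] {ωΓ : Γ → Γ → Γ → kˣ}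
    {V W : Type*} [AddCommGroup V] [Module k V] [AddCommGroup W] [Module k W]
    {SV : YDOn k ωΓ V} {SW : YDOn k ωΓ W} {SVW : YDOn k ωΓ (V ⊗[k] W)}
    (hT : IsTensorStruct SV SW SVW) {d e : Γ} {v : V} {w : W}
    (hv : v ∈ SV.grading d) (hw : w ∈ SW.grading e) :
    v ⊗ₜ[k] w ∈ SVW.grading (d * e) := by
  rw [hT.1]
  refine Submodule.mem_iSup_of_mem d ?_
  have hw' : w ∈ SW.grading (d⁻¹ * (d * e)) := by rwa [inv_mul_cancel_left]
  exact Submodule.apply_mem_map₂ _ hv hw'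

variable (ω : G → G → G → kˣ) (H : Subgroup G)
variable {V : Type*} [AddCommGroup V] [Module k V]

noncomputable def jgenL (S : YDOn k (resCocycle ω H) V) (g : G) : V →ₗ[k] IndCarrier ω H S :=
  (indRel ω H S).mkQ ∘ₗ Finsupp.lsingle g

lemma jgenL_apply (S : YDOn k (resCocycle ω H) V) (g : G) (v : V) :
    jgenL ω H S g v = jgen ω H S g v := rfl

lemma jgen_smul (S : YDOn k (resCocycle ω H) V) (g : G) (c : k) (v : V) :
    jgen ω H S g (c • v) = c • jgen ω H S g v := by
  rw [← jgenL_apply, ← jgenL_apply, map_smul]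

lemma span_jgen (S : YDOn k (resCocycle ω H) V) (s : Set V) (hs : Submodule.span k s = ⊤) :
    Submodule.span k {x : IndCarrier ω H S | ∃ g : G, ∃ v ∈ s, x = jgen ω H S g v} = ⊤ := by
  rw [eq_top_iff]
  rintro x -
  obtain ⟨y, rfl⟩ := Submodule.Quotient.mk_surjective _ x
  refine Finsupp.induction y ?_ ?_
  · rw [Submodule.Quotient.mk_zero]
    exact zero_mem _
  · intro g v y _ _ ih
    rw [Submodule.Quotient.mk_add]
    refine add_mem ?_ ih
    have hle : Submodule.span k s ≤
        (Submodule.span k {x : IndCarrier ω H S | ∃ g : G, ∃ v ∈ s, x = jgen ω H S g v}).comap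
          (jgenL ω H S g) := by
      rw [Submodule.span_le]
      intro w hw
      exact Submodule.subset_span ⟨g, w, hw, rfl⟩
    exact hle (hs ▸ Submodule.mem_top)

lemma jgen_shift (S : YDOn k (resCocycle ω H) V) (g : G) (h d : ↥H) (v : V)
    (hv : v ∈ S.grading d) :
    jgen ω H S (g * ↑h) v = (((tauc ω g ↑h ↑d)⁻¹ : kˣ) : k) • jgen ω H S g (S.act h v) := by
  unfold jgen
  rw [← Submodule.Quotient.mk_smul, Submodule.Quotient.eq]
  exact Submodule.subset_span ⟨g, h, d, v, hv, rfl⟩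

lemma jgen_mem_grading (S : YDOn k (resCocycle ω H) V) (T : YDOn k ω (IndCarrier ω H S))
    (hT : IsIndStruct ω H S T) {e : ↥H} {v : V} (hv : v ∈ S.grading e) (g : G) :
    jgen ω H S g v ∈ T.grading (g * ↑e * g⁻¹) := by
  rw [hT.1]
  exact Submodule.subset_span ⟨g, e, v, hv, rfl, rfl⟩

end Structural



end Helpers

set_option maxHeartbeats 1600000 in
/-- Proposition 3.10: the induction functor `I : Z(Vect_H^ω) → Z(Vect_G^ω)`,
equipped with the lax structure `μ` (with unit `1 ↦ ∑ᵢ gᵢ⊗1`) and the oplax structure `ν`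
(with counit `g⊗1 ↦ 1`), is a separable Frobenius monoidal functor: the two Frobenius
compatibility conditions hold and `μ_{V,W} ∘ ν_{V,W} = id_{I(V⊗W)}` for all `V, W`. -/
theorem induction_separable_frobenius {k : Type*} [Field k] [IsAlgClosed k] {G : Type*}
    [Group G] [Finite G] [DecidableEq G] (ω : G → G → G → kˣ)
    (hω : IsCocycle ω) (hnorm : IsNormalized ω) (H : Subgroup G) :
    -- the two Frobenius compatibility conditions
    (∀ (V W U : Type) [AddCommGroup V] [Module k V] [AddCommGroup W] [Module k W]
        [AddCommGroup U] [Module k U]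
        (SV : YDOn k (resCocycle ω H) V) (SW : YDOn k (resCocycle ω H) W)
        (SU : YDOn k (resCocycle ω H) U)
        (SVW : YDOn k (resCocycle ω H) (V ⊗[k] W)) (_ : IsTensorStruct SV SW SVW)
        (SWU : YDOn k (resCocycle ω H) (W ⊗[k] U)) (_ : IsTensorStruct SW SU SWU)
        (SVW_U : YDOn k (resCocycle ω H) ((V ⊗[k] W) ⊗[k] U))
        (_ : IsTensorStruct SVW SU SVW_U)
        (SV_WU : YDOn k (resCocycle ω H) (V ⊗[k] (W ⊗[k] U)))
        (_ : IsTensorStruct SV SWU SV_WU)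
        (αH : (V ⊗[k] W) ⊗[k] U →ₗ[k] V ⊗[k] (W ⊗[k] U)) (_ : IsAssocMap SV SW SU αH)
        (αH' : V ⊗[k] (W ⊗[k] U) →ₗ[k] (V ⊗[k] W) ⊗[k] U) (_ : IsAssocInvMap SV SW SU αH')
        (TV : YDOn k ω (IndCarrier ω H SV)) (_ : IsIndStruct ω H SV TV)
        (TW : YDOn k ω (IndCarrier ω H SW)) (_ : IsIndStruct ω H SW TW)
        (TU : YDOn k ω (IndCarrier ω H SU)) (_ : IsIndStruct ω H SU TU)
        (Iα : IndCarrier ω H SVW_U →ₗ[k] IndCarrier ω H SV_WU)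
        (_ : IsIndMap ω H SVW_U SV_WU αH Iα)
        (Iα' : IndCarrier ω H SV_WU →ₗ[k] IndCarrier ω H SVW_U)
        (_ : IsIndMap ω H SV_WU SVW_U αH' Iα')
        (μ₁ : IndCarrier ω H SV ⊗[k] IndCarrier ω H SW →ₗ[k] IndCarrier ω H SVW)
        (_ : IsMuMap ω H SV SW SVW μ₁)
        (μ₂ : IndCarrier ω H SVW ⊗[k] IndCarrier ω H SU →ₗ[k] IndCarrier ω H SVW_U)
        (_ : IsMuMap ω H SVW SU SVW_U μ₂)
        (μ₃ : IndCarrier ω H SW ⊗[k] IndCarrier ω H SU →ₗ[k] IndCarrier ω H SWU)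
        (_ : IsMuMap ω H SW SU SWU μ₃)
        (μ₄ : IndCarrier ω H SV ⊗[k] IndCarrier ω H SWU →ₗ[k] IndCarrier ω H SV_WU)
        (_ : IsMuMap ω H SV SWU SV_WU μ₄)
        (ν₁ : IndCarrier ω H SVW →ₗ[k] IndCarrier ω H SV ⊗[k] IndCarrier ω H SW)
        (_ : IsNuMap ω H SV SW SVW ν₁)
        (ν₂ : IndCarrier ω H SVW_U →ₗ[k] IndCarrier ω H SVW ⊗[k] IndCarrier ω H SU)
        (_ : IsNuMap ω H SVW SU SVW_U ν₂)
        (ν₃ : IndCarrier ω H SWU →ₗ[k] IndCarrier ω H SW ⊗[k] IndCarrier ω H SU)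
        (_ : IsNuMap ω H SW SU SWU ν₃)
        (ν₄ : IndCarrier ω H SV_WU →ₗ[k] IndCarrier ω H SV ⊗[k] IndCarrier ω H SWU)
        (_ : IsNuMap ω H SV SWU SV_WU ν₄)
        (αG : (IndCarrier ω H SV ⊗[k] IndCarrier ω H SW) ⊗[k] IndCarrier ω H SU →ₗ[k]
            IndCarrier ω H SV ⊗[k] (IndCarrier ω H SW ⊗[k] IndCarrier ω H SU))
        (_ : IsAssocMap TV TW TU αG)
        (αG' : IndCarrier ω H SV ⊗[k] (IndCarrier ω H SW ⊗[k] IndCarrier ω H SU) →ₗ[k]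
            (IndCarrier ω H SV ⊗[k] IndCarrier ω H SW) ⊗[k] IndCarrier ω H SU),
        IsAssocInvMap TV TW TU αG' →
        -- first Frobenius compatibility
        (ν₂ ∘ₗ Iα' ∘ₗ μ₄
            = TensorProduct.map μ₁ LinearMap.id ∘ₗ αG' ∘ₗ TensorProduct.map LinearMap.id ν₃) ∧
        -- second Frobenius compatibility
        ν₄ ∘ₗ Iα ∘ₗ μ₂
          = TensorProduct.map LinearMap.id μ₃ ∘ₗ αG ∘ₗ TensorProduct.map ν₁ LinearMap.id) ∧
    -- separability: μ_{V,W} ∘ ν_{V,W} = id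
    (∀ (V W : Type) [AddCommGroup V] [Module k V] [AddCommGroup W] [Module k W]
        (SV : YDOn k (resCocycle ω H) V) (SW : YDOn k (resCocycle ω H) W)
        (SVW : YDOn k (resCocycle ω H) (V ⊗[k] W)), IsTensorStruct SV SW SVW →
      ∀ (μ : IndCarrier ω H SV ⊗[k] IndCarrier ω H SW →ₗ[k] IndCarrier ω H SVW)
        (ν : IndCarrier ω H SVW →ₗ[k] IndCarrier ω H SV ⊗[k] IndCarrier ω H SW),
        IsMuMap ω H SV SW SVW μ → IsNuMap ω H SV SW SVW ν → μ ∘ₗ ν = LinearMap.id) := by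
  constructor
  · intro V W U _ _ _ _ _ _ SV SW SU SVW hSVW SWU hSWU SVW_U hSVW_U SV_WU hSV_WU
      αH hαH αH' hαH' TV hTV TW hTW TU hTU Iα hIα Iα' hIα'
      μ₁ hμ₁ μ₂ hμ₂ μ₃ hμ₃ μ₄ hμ₄ ν₁ hν₁ ν₂ hν₂ ν₃ hν₃ ν₄ hν₄ αG hαG αG' hαG'
    constructor
    · -- first Frobenius compatibility
      have main : ∀ (g : G) (d e f : ↥H) (v : V) (w : W) (u : U),
          v ∈ SV.grading d → w ∈ SW.grading e → u ∈ SU.grading f →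
          (ν₂ ∘ₗ Iα' ∘ₗ μ₄) (jgen ω H SV g v ⊗ₜ[k] jgen ω H SWU g (w ⊗ₜ[k] u))
            = (TensorProduct.map μ₁ LinearMap.id ∘ₗ αG' ∘ₗ
                TensorProduct.map LinearMap.id ν₃)
                (jgen ω H SV g v ⊗ₜ[k] jgen ω H SWU g (w ⊗ₜ[k] u)) := by
        intro g d e f v w u hv hw hu
        have hvw : v ⊗ₜ[k] w ∈ SVW.grading (d * e) := tmul_mem hSVW hv hw
        have hwu : w ⊗ₜ[k] u ∈ SWU.grading (e * f) := tmul_mem hSWU hw hu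
        simp only [LinearMap.comp_apply, TensorProduct.map_tmul, LinearMap.id_coe, id_eq]
        rw [hμ₄.2 g d (e * f) v (w ⊗ₜ[k] u) hv hwu]
        simp only [map_smul]
        rw [hIα' g, hαH' d e f v w u hv hw hu, jgen_smul]
        simp only [map_smul]
        rw [hν₂ g (d * e) f (v ⊗ₜ[k] w) u hvw hu, hν₃ g e f w u hw hu]
        simp only [TensorProduct.tmul_smul, map_smul]
        rw [hαG' _ _ _ _ _ _ (jgen_mem_grading ω H SV TV hTV hv g)
            (jgen_mem_grading ω H SW TW hTW hw g) (jgen_mem_grading ω H SU TU hTU hu g)]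
        simp only [map_smul, TensorProduct.map_tmul, LinearMap.id_coe, id_eq]
        rw [hμ₁.2 g d e v w hv hw]
        simp only [← TensorProduct.smul_tmul', smul_smul]
        congr 1
        simp only [resCocycle, Subgroup.coe_mul, Units.val_inv_eq_inv_val]
        have n1 : ((gamc ω g (↑d) (↑e * ↑f) : kˣ) : k) ≠ 0 := Units.ne_zero _
        have n2 : ((gamc ω g (↑d) (↑e) : kˣ) : k) ≠ 0 := Units.ne_zero _
        field_simp
        linear_combination key_gamc ω hω g (↑d) (↑e) (↑f)
      apply ext_on_tmul (span_jgen ω H SV _ (span_homog SV))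
        (span_jgen ω H SWU _ (span_homPT SW SU))
      rintro x ⟨g, v, ⟨d, hv⟩, rfl⟩ y ⟨g', t, ⟨e, f, w, u, hw, hu, rfl⟩, rfl⟩
      by_cases hcos : g⁻¹ * g' ∈ H
      · set h : ↥H := ⟨g⁻¹ * g', hcos⟩ with hhdef
        have hg' : g' = g * ↑h := (mul_inv_cancel_left g g').symm
        have hwu : w ⊗ₜ[k] u ∈ SWU.grading (e * f) := tmul_mem hSWU hw hu
        rw [hg', jgen_shift ω H SWU g h (e * f) _ hwu, hSWU.2 h e f w u hw hu, jgen_smul]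
        simp only [TensorProduct.tmul_smul, map_smul]
        rw [main g d (h * e * h⁻¹) (h * f * h⁻¹) v (SW.act h w) (SU.act h u) hv
          (SW.act_mem h e w hw) (SU.act_mem h f u hu)]
      · simp only [LinearMap.comp_apply, TensorProduct.map_tmul, LinearMap.id_coe, id_eq]
        rw [hμ₄.1 g g' hcos v (w ⊗ₜ[k] u), map_zero, map_zero, hν₃ g' e f w u hw hu]
        simp only [TensorProduct.tmul_smul, map_smul]
        rw [hαG' _ _ _ _ _ _ (jgen_mem_grading ω H SV TV hTV hv g)
            (jgen_mem_grading ω H SW TW hTW hw g') (jgen_mem_grading ω H SU TU hTU hu g')]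
        simp only [map_smul, TensorProduct.map_tmul, LinearMap.id_coe, id_eq]
        rw [hμ₁.1 g g' hcos v w, TensorProduct.zero_tmul, smul_zero, smul_zero]
    · -- second Frobenius compatibility
      have main : ∀ (g : G) (d e f : ↥H) (v : V) (w : W) (u : U),
          v ∈ SV.grading d → w ∈ SW.grading e → u ∈ SU.grading f →
          (ν₄ ∘ₗ Iα ∘ₗ μ₂) (jgen ω H SVW g (v ⊗ₜ[k] w) ⊗ₜ[k] jgen ω H SU g u)
            = (TensorProduct.map LinearMap.id μ₃ ∘ₗ αG ∘ₗ
                TensorProduct.map ν₁ LinearMap.id)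
                (jgen ω H SVW g (v ⊗ₜ[k] w) ⊗ₜ[k] jgen ω H SU g u) := by
        intro g d e f v w u hv hw hu
        have hvw : v ⊗ₜ[k] w ∈ SVW.grading (d * e) := tmul_mem hSVW hv hw
        have hwu : w ⊗ₜ[k] u ∈ SWU.grading (e * f) := tmul_mem hSWU hw hu
        simp only [LinearMap.comp_apply, TensorProduct.map_tmul, LinearMap.id_coe, id_eq]
        rw [hμ₂.2 g (d * e) f (v ⊗ₜ[k] w) u hvw hu]
        simp only [map_smul]
        rw [hIα g, hαH d e f v w u hv hw hu, jgen_smul]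
        simp only [map_smul]
        rw [hν₄ g d (e * f) v (w ⊗ₜ[k] u) hv hwu, hν₁ g d e v w hv hw]
        simp only [← TensorProduct.smul_tmul', map_smul]
        rw [hαG _ _ _ _ _ _ (jgen_mem_grading ω H SV TV hTV hv g)
            (jgen_mem_grading ω H SW TW hTW hw g) (jgen_mem_grading ω H SU TU hTU hu g)]
        simp only [map_smul, TensorProduct.map_tmul, LinearMap.id_coe, id_eq]
        rw [hμ₃.2 g e f w u hw hu]
        simp only [TensorProduct.tmul_smul, smul_smul]
        congr 1
        simp only [resCocycle, Subgroup.coe_mul, Units.val_inv_eq_inv_val]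
        have n1 : ((gamc ω g (↑d * ↑e) (↑f) : kˣ) : k) ≠ 0 := Units.ne_zero _
        have n2 : ((gamc ω g (↑e) (↑f) : kˣ) : k) ≠ 0 := Units.ne_zero _
        field_simp
        linear_combination -key_gamc ω hω g (↑d) (↑e) (↑f)
      apply ext_on_tmul (span_jgen ω H SVW _ (span_homPT SV SW))
        (span_jgen ω H SU _ (span_homog SU))
      rintro x ⟨g, t, ⟨d, e, v, w, hv, hw, rfl⟩, rfl⟩ y ⟨g', u, ⟨f, hu⟩, rfl⟩
      by_cases hcos : g⁻¹ * g' ∈ H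
      · set h : ↥H := ⟨g⁻¹ * g', hcos⟩ with hhdef
        have hg' : g' = g * ↑h := (mul_inv_cancel_left g g').symm
        rw [hg', jgen_shift ω H SU g h f u hu]
        simp only [TensorProduct.tmul_smul, map_smul]
        rw [main g d e (h * f * h⁻¹) v w (SU.act h u) hv hw (SU.act_mem h f u hu)]
      · simp only [LinearMap.comp_apply, TensorProduct.map_tmul, LinearMap.id_coe, id_eq]
        rw [hμ₂.1 g g' hcos (v ⊗ₜ[k] w) u, map_zero, map_zero, hν₁ g d e v w hv hw]
        simp only [← TensorProduct.smul_tmul', map_smul]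
        rw [hαG _ _ _ _ _ _ (jgen_mem_grading ω H SV TV hTV hv g)
            (jgen_mem_grading ω H SW TW hTW hw g) (jgen_mem_grading ω H SU TU hTU hu g')]
        simp only [map_smul, TensorProduct.map_tmul, LinearMap.id_coe, id_eq]
        rw [hμ₃.1 g g' hcos w u, TensorProduct.tmul_zero, smul_zero, smul_zero]
  · -- separability
    intro V W _ _ _ _ SV SW SVW hSVW μ ν hμ hν
    apply LinearMap.ext_on (span_jgen ω H SVW _ (span_homPT SV SW))
    rintro x ⟨g, t, ⟨d, e, v, w, hv, hw, rfl⟩, rfl⟩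
    simp only [LinearMap.comp_apply, LinearMap.id_coe, id_eq]
    rw [hν g d e v w hv hw, μ.map_smul, hμ.2 g d e v w hv hw]
    simp only [smul_smul, ← Units.val_mul, mul_inv_cancel, Units.val_one, one_smul]
end

section
/- The induction functor I : Z(Vect_H^ω) → Z(Vect_G^ω) is both a braided lax monoidal functor and a braided oplax monoidal functor: μ_{W,V}∘c_{I(V),I(W)} = I(c_{V,W})∘μ_{V,W} and c_{I(V),I(W)}∘ν_{V,W} = ν_{W,V}∘I(c_{V,W}) for all V, W; moreover I preserves the ribbon twist θ given by θ_V(v_d) = d·v_d, i.e. I(θ_V) = θ_{I(V)} for every V. -/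
open scoped TensorProduct

namespace DW

section IndHelpers

variable {k : Type*} [Field k] {G : Type*} [Group G] [DecidableEq G]
variable (ω : G → G → G → kˣ) (H : Subgroup G)
variable {V : Type*} [AddCommGroup V] [Module k V]

lemma mulKey (g d f : G) :
    ((gamc ω g d f : kˣ) : k) * ((tauc ω (g*d*g⁻¹) g f : kˣ) : k)
      = ((tauc ω g d f : kˣ) : k) * ((gamc ω g (d*f*d⁻¹) d : kˣ) : k) := by
  have e1 : g*d*g⁻¹*g*f*(g*d*g⁻¹*g)⁻¹ = g*(d*f*d⁻¹)*g⁻¹ := by group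
  have e2 : g*d*f*(g*d)⁻¹ = g*(d*f*d⁻¹)*g⁻¹ := by group
  simp only [gamc, tauc, e1, e2, Units.val_mul, Units.val_inv_eq_inv_val]
  field_simp

lemma twistKey (g d : G) :
    ((tauc ω (g*d*g⁻¹) g d : kˣ) : k) = ((tauc ω g d d : kˣ) : k) := by
  have e1 : g*d*g⁻¹*g*d*(g*d*g⁻¹*g)⁻¹ = g*d*g⁻¹ := by group
  have e2 : g*d*d*(g*d)⁻¹ = g*d*g⁻¹ := by group
  have e3 : d*d*d⁻¹ = d := by group
  simp only [tauc, e1, e2, e3, Units.val_mul, Units.val_inv_eq_inv_val]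
  field_simp

lemma invCombo (a b c d : kˣ) (key : (d:k) * a = b * c) :
    (a : k) * ((b⁻¹ : kˣ) : k) * ((c⁻¹ : kˣ) : k) = ((d⁻¹ : kˣ) : k) := by
  push_cast
  field_simp
  linear_combination key

lemma invCombo2 (a b c d : kˣ) (key : (d:k) * a = b * c) :
    (d : k) * (a : k) * ((b⁻¹ : kˣ) : k) = (c : k) := by
  push_cast
  field_simp
  linear_combination key

variable (S : YDOn k (resCocycle ω H) V)

lemma jgen_add (g : G) (v w : V) :
    jgen ω H S g (v + w) = jgen ω H S g v + jgen ω H S g w := by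
  simp [jgen, Finsupp.single_add]

lemma jgen_smul (g : G) (c : k) (v : V) :
    jgen ω H S g (c • v) = c • jgen ω H S g v := by
  unfold jgen
  rw [← Finsupp.smul_single, Submodule.Quotient.mk_smul]

lemma jgen_zero (g : G) : jgen ω H S g (0 : V) = 0 := by
  simp [jgen]

lemma jgen_rel (g : G) (h d : ↥H) (v : V) (hv : v ∈ S.grading d) :
    jgen ω H S (g * ↑h) v
      = (((tauc ω g ↑h ↑d)⁻¹ : kˣ) : k) • jgen ω H S g (S.act h v) := by
  unfold jgen
  rw [← Submodule.Quotient.mk_smul, Submodule.Quotient.eq]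
  exact Submodule.subset_span ⟨g, h, d, v, hv, rfl⟩

lemma ind_ext_of_span {N : Type*} [AddCommGroup N] [Module k N]
    (s : Set V) (hs : Submodule.span k s = ⊤)
    {f₁ f₂ : IndCarrier ω H S →ₗ[k] N}
    (hgen : ∀ (g : G), ∀ v ∈ s, f₁ (jgen ω H S g v) = f₂ (jgen ω H S g v)) :
    f₁ = f₂ := by
  have key : ∀ (g : G) (v : V), f₁ (jgen ω H S g v) = f₂ (jgen ω H S g v) := by
    intro g v
    have hv : v ∈ Submodule.span k s := by rw [hs]; trivial
    induction hv using Submodule.span_induction with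
    | mem x hx => exact hgen g x hx
    | zero => rw [jgen_zero]; simp
    | add x y hx hy ihx ihy => rw [jgen_add, map_add, map_add, ihx, ihy]
    | smul c x hx ih => rw [jgen_smul, map_smul, map_smul, ih]
  refine LinearMap.ext fun x => ?_
  obtain ⟨y, rfl⟩ := Submodule.Quotient.mk_surjective (indRel ω H S) x
  induction y using Finsupp.induction with
  | zero => simp
  | single_add a b f _ _ ih =>
      rw [Submodule.Quotient.mk_add, map_add, map_add, ih]
      exact congrArg (· + f₂ (Submodule.Quotient.mk f)) (key a b)

lemma span_gradings : Submodule.span k (⋃ d : ↥H, (S.grading d : Set V)) = ⊤ := by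
  rw [Submodule.span_iUnion]
  simp only [Submodule.span_eq]
  exact S.internal.submodule_iSup_eq_top

lemma jgen_mem_grading {T : YDOn k ω (IndCarrier ω H S)} (hT : IsIndStruct ω H S T)
    (g : G) (e : ↥H) (v : V) (hv : v ∈ S.grading e) :
    jgen ω H S g v ∈ T.grading (g * ↑e * g⁻¹) := by
  rw [hT.1]
  exact Submodule.subset_span ⟨g, e, v, hv, rfl, rfl⟩

variable {W : Type*} [AddCommGroup W] [Module k W] (SW : YDOn k (resCocycle ω H) W)

lemma ind_tensor_ext {N : Type*} [AddCommGroup N] [Module k N]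
    {f₁ f₂ : IndCarrier ω H S ⊗[k] IndCarrier ω H SW →ₗ[k] N}
    (hgen : ∀ (g g' : G) (d f : ↥H) (a : V) (b : W), a ∈ S.grading d → b ∈ SW.grading f →
      f₁ (jgen ω H S g a ⊗ₜ[k] jgen ω H SW g' b)
        = f₂ (jgen ω H S g a ⊗ₜ[k] jgen ω H SW g' b)) :
    f₁ = f₂ := by
  apply TensorProduct.ext
  apply ind_ext_of_span ω H S _ (span_gradings ω H S)
  intro g a ha
  rw [Set.mem_iUnion] at ha
  obtain ⟨d, ha⟩ := ha
  apply ind_ext_of_span ω H SW _ (span_gradings ω H SW)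
  intro g' b hb
  rw [Set.mem_iUnion] at hb
  obtain ⟨f, hb⟩ := hb
  exact hgen g g' d f a b ha hb

lemma span_tmul_gradings :
    Submodule.span k {t : V ⊗[k] W | ∃ (d f : ↥H) (a : V) (b : W),
      a ∈ S.grading d ∧ b ∈ SW.grading f ∧ t = a ⊗ₜ[k] b} = ⊤ := by
  rw [eq_top_iff, ← TensorProduct.map₂_mk_top_top_eq_top (R := k) (M := V) (N := W),
    ← span_gradings ω H S, ← span_gradings ω H SW, Submodule.map₂_span_span]
  apply Submodule.span_mono
  rintro t ⟨a, ha, b, hb, rfl⟩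
  rw [Set.mem_iUnion] at ha hb
  obtain ⟨d, ha⟩ := ha
  obtain ⟨f, hb⟩ := hb
  exact ⟨d, f, a, b, ha, hb, rfl⟩

end IndHelpers

end DW

open DW

/-- Proposition 3.11: the induction functor `I : Z(Vect_H^ω) → Z(Vect_G^ω)`
is both a braided lax and a braided oplax monoidal functor:
`μ_{W,V} ∘ c_{I(V),I(W)} = I(c_{V,W}) ∘ μ_{V,W}` and
`c_{I(V),I(W)} ∘ ν_{V,W} = ν_{W,V} ∘ I(c_{V,W})`; moreover `I` preserves the ribbon twist
`θ_V(v_d) = d·v_d`, i.e. `I(θ_V) = θ_{I(V)}`. -/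
theorem induction_braided_ribbon {k : Type*} [Field k] [IsAlgClosed k] {G : Type*}
    [Group G] [Finite G] [DecidableEq G] (ω : G → G → G → kˣ)
    (hω : IsCocycle ω) (hnorm : IsNormalized ω) (H : Subgroup G) :
    -- braided lax and braided oplax compatibility
    (∀ (V W : Type) [AddCommGroup V] [Module k V] [AddCommGroup W] [Module k W]
        (SV : YDOn k (resCocycle ω H) V) (SW : YDOn k (resCocycle ω H) W)
        (SVW : YDOn k (resCocycle ω H) (V ⊗[k] W)) (_ : IsTensorStruct SV SW SVW)
        (SWV : YDOn k (resCocycle ω H) (W ⊗[k] V)) (_ : IsTensorStruct SW SV SWV)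
        (cH : V ⊗[k] W →ₗ[k] W ⊗[k] V) (_ : IsBraidingMap SV SW cH)
        (TV : YDOn k ω (IndCarrier ω H SV)) (_ : IsIndStruct ω H SV TV)
        (TW : YDOn k ω (IndCarrier ω H SW)) (_ : IsIndStruct ω H SW TW)
        (cG : IndCarrier ω H SV ⊗[k] IndCarrier ω H SW →ₗ[k]
            IndCarrier ω H SW ⊗[k] IndCarrier ω H SV) (_ : IsBraidingMap TV TW cG)
        (IcH : IndCarrier ω H SVW →ₗ[k] IndCarrier ω H SWV)
        (_ : IsIndMap ω H SVW SWV cH IcH)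
        (μVW : IndCarrier ω H SV ⊗[k] IndCarrier ω H SW →ₗ[k] IndCarrier ω H SVW)
        (_ : IsMuMap ω H SV SW SVW μVW)
        (μWV : IndCarrier ω H SW ⊗[k] IndCarrier ω H SV →ₗ[k] IndCarrier ω H SWV)
        (_ : IsMuMap ω H SW SV SWV μWV)
        (νVW : IndCarrier ω H SVW →ₗ[k] IndCarrier ω H SV ⊗[k] IndCarrier ω H SW)
        (_ : IsNuMap ω H SV SW SVW νVW)
        (νWV : IndCarrier ω H SWV →ₗ[k] IndCarrier ω H SW ⊗[k] IndCarrier ω H SV),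
        IsNuMap ω H SW SV SWV νWV →
        -- braided lax monoidal
        μWV ∘ₗ cG = IcH ∘ₗ μVW ∧
        -- braided oplax monoidal
        cG ∘ₗ νVW = νWV ∘ₗ IcH) ∧
    -- the ribbon twist is preserved: I(θ_V) = θ_{I(V)}
    (∀ (V : Type) [AddCommGroup V] [Module k V]
        (SV : YDOn k (resCocycle ω H) V)
        (TV : YDOn k ω (IndCarrier ω H SV)) (_ : IsIndStruct ω H SV TV)
        (θV : V →ₗ[k] V) (_ : IsTwistMap SV θV)
        (ΘV : IndCarrier ω H SV →ₗ[k] IndCarrier ω H SV)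
        (_ : IsIndMap ω H SV SV θV ΘV)
        (θI : IndCarrier ω H SV →ₗ[k] IndCarrier ω H SV),
        IsTwistMap TV θI → ΘV = θI) := by
  constructor
  · intro V W _ _ _ _ SV SW SVW hSVW SWV hSWV cH hcH TV hTV TW hTW cG hcG IcH hIcH
      μVW hμVW μWV hμWV νVW hνVW νWV hνWV
    -- the key scalar identity in `k`
    have scalar : ∀ (d f : ↥H) (g : G),
        ((tauc ω (g * ↑d * g⁻¹) g ↑f : kˣ) : k) * (((tauc ω g ↑d ↑f)⁻¹ : kˣ) : k)
            * (((gamc ω g ↑(d * f * d⁻¹) ↑d)⁻¹ : kˣ) : k)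
          = (((gamc ω g ↑d ↑f)⁻¹ : kˣ) : k) := by
      intro d f g
      rw [show ((d * f * d⁻¹ : ↥H) : G) = ↑d * ↑f * (↑d)⁻¹ from rfl]
      exact invCombo _ _ _ _ (mulKey ω (k := k) g (↑d) (↑f))
    have e0 : ∀ g : G, ∀ d : ↥H, g * ↑d * g⁻¹ * g = g * ↑d := by
      intro g d; group
    have coreL : ∀ (g : G) (d f : ↥H) (a : V) (b : W),
        a ∈ SV.grading d → b ∈ SW.grading f →
        μWV (cG (jgen ω H SV g a ⊗ₜ[k] jgen ω H SW g b))
          = IcH (μVW (jgen ω H SV g a ⊗ₜ[k] jgen ω H SW g b)) := by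
      intro g d f a b ha hb
      rw [hcG _ _ _ (jgen_mem_grading ω H SV hTV g d a ha),
        hTW.2 (g * ↑d * g⁻¹) g f b hb, e0 g d, jgen_rel ω H SW g d f b hb,
        ← TensorProduct.smul_tmul', ← TensorProduct.smul_tmul', map_smul, map_smul,
        hμWV.2 g (d * f * d⁻¹) d (SW.act d b) a (SW.act_mem d f b hb) ha,
        hμVW.2 g d f a b ha hb, map_smul, hIcH g (a ⊗ₜ[k] b), hcH d a b ha,
        smul_smul, smul_smul, scalar d f g]
    constructor
    · -- braided lax monoidal
      apply ind_tensor_ext ω H SV SW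
      intro g g' d f a b ha hb
      simp only [LinearMap.comp_apply]
      by_cases hcos : g⁻¹ * g' ∈ H
      · have hg' : g' = g * ((⟨g⁻¹ * g', hcos⟩ : ↥H) : G) := by
          rw [show ((⟨g⁻¹ * g', hcos⟩ : ↥H) : G) = g⁻¹ * g' from rfl]; group
        rw [hg', jgen_rel ω H SW g ⟨g⁻¹ * g', hcos⟩ f b hb, TensorProduct.tmul_smul,
          map_smul, map_smul, map_smul, map_smul,
          coreL g d _ a _ ha (SW.act_mem ⟨g⁻¹ * g', hcos⟩ f b hb)]
      · have hne : (g * ↑d * g⁻¹ * g')⁻¹ * g ∉ H := by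
          intro hmem
          apply hcos
          have h2 := H.inv_mem (H.mul_mem hmem d.2)
          have e : ((g * ↑d * g⁻¹ * g')⁻¹ * g * ↑d)⁻¹ = g⁻¹ * g' := by group
          rwa [e] at h2
        rw [hμVW.1 g g' hcos a b, map_zero,
          hcG _ _ _ (jgen_mem_grading ω H SV hTV g d a ha),
          hTW.2 (g * ↑d * g⁻¹) g' f b hb, ← TensorProduct.smul_tmul', map_smul,
          hμWV.1 _ _ hne b a, smul_zero]
    · -- braided oplax monoidal
      apply ind_ext_of_span ω H SVW _ (span_tmul_gradings ω H SV SW)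
      rintro g t ⟨d, f, a, b, ha, hb, rfl⟩
      simp only [LinearMap.comp_apply]
      rw [hνVW g d f a b ha hb, map_smul,
        hcG _ _ _ (jgen_mem_grading ω H SV hTV g d a ha),
        hTW.2 (g * ↑d * g⁻¹) g f b hb, e0 g d, jgen_rel ω H SW g d f b hb,
        ← TensorProduct.smul_tmul', ← TensorProduct.smul_tmul',
        hIcH g (a ⊗ₜ[k] b), hcH d a b ha,
        hνWV g (d * f * d⁻¹) d (SW.act d b) a (SW.act_mem d f b hb) ha,
        smul_smul, smul_smul]
      congr 1
      rw [show ((d * f * d⁻¹ : ↥H) : G) = ↑d * ↑f * (↑d)⁻¹ from rfl]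
      exact invCombo2 _ _ _ _ (mulKey ω (k := k) g (↑d) (↑f))
  · -- the ribbon twist is preserved
    intro V _ _ SV TV hTV θV hθ ΘV hΘ θI hθI
    apply ind_ext_of_span ω H SV _ (span_gradings ω H SV)
    intro g v hv
    rw [Set.mem_iUnion] at hv
    obtain ⟨d, hv⟩ := hv
    rw [hΘ g v, hθ d v hv,
      hθI (g * ↑d * g⁻¹) _ (jgen_mem_grading ω H SV hTV g d v hv),
      hTV.2 (g * ↑d * g⁻¹) g d v hv, (by group : g * ↑d * g⁻¹ * g = g * ↑d),
      jgen_rel ω H SV g d d v hv, smul_smul, twistKey ω (k := k) g (↑d),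
      Units.val_inv_eq_inv_val, mul_inv_cancel₀ (Units.ne_zero _), one_smul]
end

section
/- Assume the index |G:H| is invertible in k. Then the coset algebra A_H is a rigid Frobenius algebra in Z(Vect_G^ω): it is a connected commutative Frobenius algebra with m∘Δ = id_{A_H}, ε(1_{A_H}) = |G:H|·1, and quantum dimension dim_j(A_H) = |G:H| ≠ 0. -/
open scoped TensorProduct

namespace DW

variable (k : Type*) [Field k] {G : Type*} [Group G] (H : Subgroup G)
variable [Fintype (G ⧸ H)] [DecidableEq (G ⧸ H)]

/-- The comultiplication of the coset algebra: `Δ(δ_{gH}) = δ_{gH} ⊗ δ_{gH}`. -/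
noncomputable def AHcomul :
    ((G ⧸ H) → k) →ₗ[k] ((G ⧸ H) → k) ⊗[k] ((G ⧸ H) → k) :=
  ∑ x : G ⧸ H, (LinearMap.proj x).smulRight (Pi.single x (1 : k) ⊗ₜ[k] Pi.single x (1 : k))

/-- The counit of the coset algebra: `ε(δ_{gH}) = 1`. -/
def AHcounit : ((G ⧸ H) → k) →ₗ[k] k :=
  ∑ x : G ⧸ H, LinearMap.proj x

end DW

open DW

/-! ### Auxiliary lemmas for the coset algebra -/

section CosetAux

variable {k : Type*} [Field k] {G : Type*} [Group G] [DecidableEq G]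

theorem DW.triv_internal {V : Type*} [AddCommGroup V] [Module k V] :
    DirectSum.IsInternal (fun d : G => if d = 1 then (⊤ : Submodule k V) else ⊥) := by
  rw [DirectSum.isInternal_submodule_iff_iSupIndep_and_iSup_eq_top]
  constructor
  · intro i
    by_cases hi : i = 1
    · subst hi
      have h : (⨆ (j : G) (_ : j ≠ 1), if j = 1 then (⊤ : Submodule k V) else ⊥) = ⊥ := by
        simp only [iSup_eq_bot]
        intro j hj
        rw [if_neg hj]
      simp only [h]
      exact disjoint_bot_right
    · simp only [if_neg hi]
      exact disjoint_bot_left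
  · rw [eq_top_iff]
    calc (⊤ : Submodule k V) = (if (1:G) = 1 then (⊤ : Submodule k V) else ⊥) := by
          rw [if_pos rfl]
      _ ≤ _ := le_iSup (fun d : G => if d = 1 then (⊤ : Submodule k V) else ⊥) 1

theorem DW.tauc_triv {ω : G → G → G → kˣ} (hn : IsNormalized ω) (h g : G) :
    tauc ω h g 1 = 1 := by
  have h1 : h * g * 1 * (h * g)⁻¹ = 1 := by group
  have h2 : g * 1 * g⁻¹ = 1 := by group
  rw [tauc, h1, h2, hn h g 1 (Or.inr (Or.inr rfl)), hn 1 h g (Or.inl rfl),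
    hn h 1 g (Or.inr (Or.inl rfl))]
  simp

theorem DW.gamc_triv {ω : G → G → G → kˣ} (hn : IsNormalized ω) (h : G) :
    gamc ω h 1 1 = 1 := by
  have h1 : h * 1 * h⁻¹ = 1 := by group
  rw [gamc, h1, hn h 1 1 (Or.inr (Or.inl rfl)), hn 1 1 h (Or.inl rfl),
    hn 1 h 1 (Or.inl rfl)]
  simp

variable (H : Subgroup G)

theorem DW.cosetAct_one' : cosetAct k H (1:G) = LinearMap.id := by
  ext f x
  show f ((1:G)⁻¹ • x) = f x
  rw [inv_one, one_smul]

theorem DW.cosetAct_mul (c g : G) (f : (G ⧸ H) → k) :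
    cosetAct k H c (cosetAct k H g f) = cosetAct k H (c * g) f := by
  ext x
  show f (g⁻¹ • c⁻¹ • x) = f ((c * g)⁻¹ • x)
  rw [mul_inv_rev, mul_smul]

theorem DW.cosetAct_mul_fun (c : G) (v w : (G ⧸ H) → k) :
    cosetAct k H c v * cosetAct k H c w = cosetAct k H c (v * w) := rfl

variable [DecidableEq (G ⧸ H)]

theorem DW.cosetAct_single (c : G) (x : G ⧸ H) :
    cosetAct k H c (Pi.single x (1:k)) = Pi.single (c • x) 1 := by
  ext y
  have h0 : cosetAct k H c (Pi.single x (1:k)) y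
      = (Pi.single x (1:k) : (G ⧸ H) → k) (c⁻¹ • y) := rfl
  rw [h0]
  by_cases h : y = c • x
  · subst h
    rw [inv_smul_smul, Pi.single_eq_same, Pi.single_eq_same]
  · have h' : c⁻¹ • y ≠ x := fun hh => h (by rw [← hh, smul_inv_smul])
    rw [Pi.single_eq_of_ne h', Pi.single_eq_of_ne h]

theorem DW.single_mul_single (x y : G ⧸ H) :
    (Pi.single x (1:k) : (G ⧸ H) → k) * Pi.single y 1
      = if x = y then Pi.single x 1 else 0 := by
  ext z
  by_cases hxy : x = y <;> by_cases hzx : z = x <;>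
    simp_all [Pi.single_apply, Pi.mul_apply]

noncomputable def DW.cosetYD [Fintype (G ⧸ H)] (ω : G → G → G → kˣ) (hn : IsNormalized ω) :
    YDOn k ω ((G ⧸ H) → k) where
  grading d := if d = 1 then ⊤ else ⊥
  internal := DW.triv_internal
  act c := cosetAct k H c
  act_one := DW.cosetAct_one' H
  act_mem g d v hv := by
    by_cases hd : d = 1
    · subst hd
      simp
    · simp only [if_neg hd, Submodule.mem_bot] at hv
      subst hv
      simp
  act_act h g d v hv := by
    by_cases hd : d = 1
    · subst hd
      simp only [DW.tauc_triv hn, Units.val_one, one_smul]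
      exact DW.cosetAct_mul H h g v
    · simp only [if_neg hd, Submodule.mem_bot] at hv
      subst hv
      simp

variable [Fintype (G ⧸ H)]

@[simp] theorem DW.cosetYD_grading (ω : G → G → G → kˣ) (hn : IsNormalized ω) (d : G) :
    (DW.cosetYD H ω hn).grading d = if d = 1 then ⊤ else ⊥ := rfl

@[simp] theorem DW.cosetYD_act (ω : G → G → G → kˣ) (hn : IsNormalized ω) (c : G) :
    (DW.cosetYD H ω hn).act c = cosetAct k H c := rfl

theorem DW.AHcomul_apply (f : (G ⧸ H) → k) :
    AHcomul k H f = ∑ y : G ⧸ H, f y • (Pi.single y (1:k) ⊗ₜ[k] Pi.single y (1:k)) := by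
  rw [AHcomul]
  simp only [LinearMap.sum_apply, LinearMap.smulRight_apply, LinearMap.proj_apply]

theorem DW.AHcomul_single (x : G ⧸ H) :
    AHcomul k H (Pi.single x (1:k)) = Pi.single x (1:k) ⊗ₜ[k] Pi.single x 1 := by
  rw [DW.AHcomul_apply]
  rw [Finset.sum_eq_single x]
  · rw [Pi.single_eq_same, one_smul]
  · intro y _ hy
    rw [Pi.single_eq_of_ne hy, zero_smul]
  · intro hx
    exact absurd (Finset.mem_univ x) hx

theorem DW.AHcounit_apply (f : (G ⧸ H) → k) :
    AHcounit k H f = ∑ y : G ⧸ H, f y := by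
  rw [AHcounit]
  simp only [LinearMap.sum_apply, LinearMap.proj_apply]

theorem DW.AHcounit_single (x : G ⧸ H) :
    AHcounit k H (Pi.single x (1:k)) = 1 := by
  rw [DW.AHcounit_apply]
  rw [Finset.sum_eq_single x]
  · exact Pi.single_eq_same x 1
  · intro y _ hy
    exact Pi.single_eq_of_ne hy 1
  · intro hx
    exact absurd (Finset.mem_univ x) hx

theorem DW.single_eq_smul (x : G ⧸ H) (c : k) :
    (Pi.single x c : (G ⧸ H) → k) = c • (Pi.single x 1 : (G ⧸ H) → k) := by
  ext z
  rcases eq_or_ne z x with rfl | hz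
  · rw [Pi.single_eq_same, Pi.smul_apply, Pi.single_eq_same, smul_eq_mul, mul_one]
  · rw [Pi.single_eq_of_ne hz, Pi.smul_apply, Pi.single_eq_of_ne hz, smul_eq_mul, mul_zero]

theorem DW.pi_map_ext {P : Type*} [AddCommGroup P] [Module k P]
    {f g : ((G ⧸ H) → k) →ₗ[k] P}
    (h : ∀ x : G ⧸ H, f (Pi.single x 1) = g (Pi.single x 1)) : f = g := by
  apply LinearMap.pi_ext'
  intro x
  apply LinearMap.ext
  intro c
  have hx : (LinearMap.single k (fun _ : G ⧸ H => k) x) c = Pi.single x c := rfl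
  simp only [LinearMap.comp_apply, hx, DW.single_eq_smul H x c, map_smul, h x]

theorem DW.tensor_ext {P : Type*} [AddCommGroup P] [Module k P]
    {f g : ((G ⧸ H) → k) ⊗[k] ((G ⧸ H) → k) →ₗ[k] P}
    (h : ∀ x y : G ⧸ H,
      f (Pi.single x 1 ⊗ₜ[k] Pi.single y 1) = g (Pi.single x 1 ⊗ₜ[k] Pi.single y 1)) :
    f = g := by
  apply TensorProduct.ext
  apply DW.pi_map_ext H
  intro x
  apply DW.pi_map_ext H
  intro y
  exact h x y

end CosetAux


set_option maxHeartbeats 1600000 in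
/-- Example 3.13 and Lemma 3.15: if `|G:H|` is invertible in `k`, the
coset algebra `A_H = k(G/H)` — with trivial `G`-grading, twisted action `c·δ_{gH} = δ_{cgH}`,
pointwise multiplication `δ_{gH}δ_{kH} = δ_{gH}` if `gH=kH` (else `0`), unit `∑ δ_{gᵢH}`,
comultiplication `Δ(δ_{gH}) = δ_{gH}⊗δ_{gH}` and counit `ε(δ_{gH}) = 1` — is a rigid
Frobenius algebra in `Z(Vect_G^ω)`: a connected commutative Frobenius algebra with
`m∘Δ = id`, `ε(1) = |G:H|` and quantum dimension `|G:H| ≠ 0`. -/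
theorem cosetAlgebra_rigidFrobenius {k : Type*} [Field k] [IsAlgClosed k] {G : Type*}
    [Group G] [Finite G] [DecidableEq G] (ω : G → G → G → kˣ)
    (hω : IsCocycle ω) (hnorm : IsNormalized ω) (H : Subgroup G)
    [Fintype (G ⧸ H)] [DecidableEq (G ⧸ H)]
    (hind : (H.index : k) ≠ 0) :
    ∃ SA : YDOn k ω ((G ⧸ H) → k),
      -- the Yetter–Drinfeld structure of A_H: trivial grading and action c·δ_{gH} = δ_{cgH}
      SA.grading 1 = ⊤ ∧ (∀ d : G, d ≠ 1 → SA.grading d = ⊥) ∧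
      (∀ c : G, SA.act c = cosetAct k H c) ∧
      -- the multiplication and unit are morphisms in Z(Vect_G^ω)
      (∀ T : YDOn k ω (((G ⧸ H) → k) ⊗[k] ((G ⧸ H) → k)),
          IsTensorStruct SA SA T → IsYDHom T SA (LinearMap.mul' k ((G ⧸ H) → k))) ∧
      ((1 : (G ⧸ H) → k) ∈ SA.grading 1) ∧
      (∀ g : G, SA.act g (1 : (G ⧸ H) → k) = 1) ∧
      -- associativity and unitality in the category
      (∀ a, IsAssocMap SA SA SA a →
          LinearMap.mul' k ((G ⧸ H) → k)
              ∘ₗ TensorProduct.map (LinearMap.mul' k ((G ⧸ H) → k)) LinearMap.id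
            = LinearMap.mul' k ((G ⧸ H) → k)
              ∘ₗ TensorProduct.map LinearMap.id (LinearMap.mul' k ((G ⧸ H) → k)) ∘ₗ a) ∧
      (∀ x : (G ⧸ H) → k,
          LinearMap.mul' k ((G ⧸ H) → k) (1 ⊗ₜ[k] x) = x ∧
          LinearMap.mul' k ((G ⧸ H) → k) (x ⊗ₜ[k] 1) = x) ∧
      -- commutativity
      (∀ c, IsBraidingMap SA SA c →
          LinearMap.mul' k ((G ⧸ H) → k) ∘ₗ c = LinearMap.mul' k ((G ⧸ H) → k)) ∧
      -- connectedness: Hom(1, A_H) is one-dimensional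
      Module.finrank k
        ↥(SA.grading 1 ⊓ ⨅ g : G,
            LinearMap.eqLocus (SA.act g) (LinearMap.id : ((G ⧸ H) → k) →ₗ[k] _)) = 1 ∧
      -- Δ and ε are morphisms in Z(Vect_G^ω)
      (∀ T : YDOn k ω (((G ⧸ H) → k) ⊗[k] ((G ⧸ H) → k)),
          IsTensorStruct SA SA T → IsYDHom SA T (AHcomul k H)) ∧
      (∀ g : G, AHcounit k H ∘ₗ SA.act g = AHcounit k H) ∧
      (∀ d : G, d ≠ 1 → ∀ v ∈ SA.grading d, AHcounit k H v = 0) ∧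
      -- coassociativity and counitality
      (∀ a, IsAssocMap SA SA SA a →
          a ∘ₗ TensorProduct.map (AHcomul k H) LinearMap.id ∘ₗ AHcomul k H
            = TensorProduct.map LinearMap.id (AHcomul k H) ∘ₗ AHcomul k H) ∧
      ((TensorProduct.lid k ((G ⧸ H) → k)).toLinearMap
          ∘ₗ TensorProduct.map (AHcounit k H) LinearMap.id ∘ₗ AHcomul k H = LinearMap.id) ∧
      ((TensorProduct.rid k ((G ⧸ H) → k)).toLinearMap
          ∘ₗ TensorProduct.map LinearMap.id (AHcounit k H) ∘ₗ AHcomul k H = LinearMap.id) ∧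
      -- the Frobenius compatibility conditions
      (∀ a a', IsAssocMap SA SA SA a → IsAssocInvMap SA SA SA a' →
          TensorProduct.map (LinearMap.mul' k ((G ⧸ H) → k)) LinearMap.id ∘ₗ a'
              ∘ₗ TensorProduct.map LinearMap.id (AHcomul k H)
            = AHcomul k H ∘ₗ LinearMap.mul' k ((G ⧸ H) → k) ∧
          AHcomul k H ∘ₗ LinearMap.mul' k ((G ⧸ H) → k)
            = TensorProduct.map LinearMap.id (LinearMap.mul' k ((G ⧸ H) → k)) ∘ₗ a
              ∘ₗ TensorProduct.map (AHcomul k H) LinearMap.id) ∧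
      -- specialness: m∘Δ = id and ε(1) = |G:H|
      (LinearMap.mul' k ((G ⧸ H) → k) ∘ₗ AHcomul k H = LinearMap.id) ∧
      (AHcounit k H (1 : (G ⧸ H) → k) = (H.index : k)) ∧
      -- quantum dimension dim_j(A_H) = |G:H| ≠ 0
      (AHcounit k H (LinearMap.mul' k ((G ⧸ H) → k) (AHcomul k H (1 : (G ⧸ H) → k)))
          = (H.index : k)) ∧
      (H.index : k) ≠ 0 := by
  classical
  have hmem1 : ∀ v : (G ⧸ H) → k, v ∈ (DW.cosetYD H ω hnorm).grading 1 := by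
    intro v
    rw [DW.cosetYD_grading, if_pos rfl]
    trivial
  have hmem0 : ∀ d : G, d ≠ 1 → ∀ v ∈ (DW.cosetYD H ω hnorm).grading d, v = 0 := by
    intro d hd v hv
    rw [DW.cosetYD_grading, if_neg hd, Submodule.mem_bot] at hv
    exact hv
  have hTact : ∀ T : YDOn k ω (((G ⧸ H) → k) ⊗[k] ((G ⧸ H) → k)),
      IsTensorStruct (DW.cosetYD H ω hnorm) (DW.cosetYD H ω hnorm) T →
      ∀ (g : G) (v w : (G ⧸ H) → k),
        T.act g (v ⊗ₜ[k] w) = cosetAct k H g v ⊗ₜ[k] cosetAct k H g w := by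
    intro T hT g v w
    rw [hT.2 g 1 1 v w (hmem1 v) (hmem1 w), DW.gamc_triv hnorm, Units.val_one, one_smul,
      DW.cosetYD_act]
  have hTgr1 : ∀ T : YDOn k ω (((G ⧸ H) → k) ⊗[k] ((G ⧸ H) → k)),
      IsTensorStruct (DW.cosetYD H ω hnorm) (DW.cosetYD H ω hnorm) T →
      T.grading 1 = ⊤ := by
    intro T hT
    rw [eq_top_iff, hT.1 1]
    refine le_trans ?_ (le_iSup _ (1:G))
    have h1 : (1:G)⁻¹ * 1 = 1 := by group
    rw [h1, DW.cosetYD_grading, if_pos rfl, TensorProduct.map₂_mk_top_top_eq_top]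
  have hTgr0 : ∀ T : YDOn k ω (((G ⧸ H) → k) ⊗[k] ((G ⧸ H) → k)),
      IsTensorStruct (DW.cosetYD H ω hnorm) (DW.cosetYD H ω hnorm) T →
      ∀ d : G, d ≠ 1 → T.grading d = ⊥ := by
    intro T hT d hd
    rw [hT.1 d, iSup_eq_bot]
    intro a
    rcases eq_or_ne a 1 with rfl | ha
    · have h1 : (1:G)⁻¹ * d = d := by group
      rw [h1, DW.cosetYD_grading H ω hnorm d, if_neg hd, Submodule.map₂_bot_right]
    · rw [DW.cosetYD_grading H ω hnorm a, if_neg ha, Submodule.map₂_bot_left]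
  have hassoc : ∀ a, IsAssocMap (DW.cosetYD H ω hnorm) (DW.cosetYD H ω hnorm)
      (DW.cosetYD H ω hnorm) a →
      ∀ u v w : (G ⧸ H) → k, a ((u ⊗ₜ[k] v) ⊗ₜ[k] w) = u ⊗ₜ[k] (v ⊗ₜ[k] w) := by
    intro a ha u v w
    rw [ha 1 1 1 u v w (hmem1 u) (hmem1 v) (hmem1 w), hnorm 1 1 1 (Or.inl rfl), inv_one,
      Units.val_one, one_smul]
  have hassoc' : ∀ a', IsAssocInvMap (DW.cosetYD H ω hnorm) (DW.cosetYD H ω hnorm)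
      (DW.cosetYD H ω hnorm) a' →
      ∀ u v w : (G ⧸ H) → k, a' (u ⊗ₜ[k] (v ⊗ₜ[k] w)) = (u ⊗ₜ[k] v) ⊗ₜ[k] w := by
    intro a' ha' u v w
    rw [ha' 1 1 1 u v w (hmem1 u) (hmem1 v) (hmem1 w), hnorm 1 1 1 (Or.inl rfl),
      Units.val_one, one_smul]
  have hspecial : LinearMap.mul' k ((G ⧸ H) → k) ∘ₗ AHcomul k H = LinearMap.id := by
    apply DW.pi_map_ext H
    intro x
    rw [LinearMap.comp_apply, DW.AHcomul_single, LinearMap.mul'_apply, DW.single_mul_single,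
      if_pos rfl, LinearMap.id_apply]
  have hcounit1 : AHcounit k H (1 : (G ⧸ H) → k) = (H.index : k) := by
    rw [DW.AHcounit_apply]
    simp only [Pi.one_apply]
    rw [Finset.sum_const, Finset.card_univ, nsmul_eq_mul, mul_one,
      Subgroup.index_eq_card, Nat.card_eq_fintype_card]
  refine ⟨DW.cosetYD H ω hnorm, ?_, ?_, ?_, ?_, hmem1 _, ?_, ?_, ?_, ?_, ?_, ?_, ?_, ?_,
    ?_, ?_, ?_, ?_, hspecial, hcounit1, ?_, hind⟩
  -- grading 1 = ⊤
  · rw [DW.cosetYD_grading, if_pos rfl]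
  -- grading d = ⊥ for d ≠ 1
  · intro d hd
    rw [DW.cosetYD_grading, if_neg hd]
  -- action
  · intro c
    rw [DW.cosetYD_act]
  -- multiplication is a morphism
  · intro T hT
    constructor
    · intro d v hv
      rcases eq_or_ne d 1 with rfl | hd
      · exact hmem1 _
      · rw [hTgr0 T hT d hd, Submodule.mem_bot] at hv
        rw [hv, map_zero]
        exact Submodule.zero_mem _
    · intro g
      apply TensorProduct.ext'
      intro v w
      rw [LinearMap.comp_apply, LinearMap.comp_apply, hTact T hT, LinearMap.mul'_apply,
        LinearMap.mul'_apply, DW.cosetYD_act, DW.cosetAct_mul_fun]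
  -- unit is invariant
  · intro g
    rfl
  -- associativity
  · intro a ha
    apply TensorProduct.ext_threefold
    intro u v w
    simp only [LinearMap.comp_apply, TensorProduct.map_tmul, LinearMap.id_apply,
      LinearMap.mul'_apply, hassoc a ha u v w]
    exact mul_assoc u v w
  -- unitality
  · intro x
    exact ⟨by rw [LinearMap.mul'_apply, one_mul], by rw [LinearMap.mul'_apply, mul_one]⟩
  -- commutativity
  · intro c hc
    apply TensorProduct.ext'
    intro v w
    rw [LinearMap.comp_apply, hc 1 v w (hmem1 v), (DW.cosetYD H ω hnorm).act_one,
      LinearMap.id_apply, LinearMap.mul'_apply, LinearMap.mul'_apply, mul_comm]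
  -- connectedness
  · have hsub : ((DW.cosetYD H ω hnorm).grading 1 ⊓ ⨅ g : G,
        LinearMap.eqLocus ((DW.cosetYD H ω hnorm).act g)
          (LinearMap.id : ((G ⧸ H) → k) →ₗ[k] _))
        = Submodule.span k {(1 : (G ⧸ H) → k)} := by
      apply le_antisymm
      · intro v hv
        rw [Submodule.mem_inf, Submodule.mem_iInf] at hv
        have hinv : ∀ g : G, ∀ x : G ⧸ H, v (g⁻¹ • x) = v x := by
          intro g x
          have h1 : (DW.cosetYD H ω hnorm).act g v = v := hv.2 g
          exact congrFun h1 x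
        rw [Submodule.mem_span_singleton]
        refine ⟨v ((1 : G) : G ⧸ H), ?_⟩
        ext x
        rw [Pi.smul_apply, Pi.one_apply, smul_eq_mul, mul_one]
        induction x using QuotientGroup.induction_on with
        | H z =>
          have h1 := hinv z ((z : G ⧸ H))
          have h2 : (z⁻¹ • ((z : G) : G ⧸ H)) = ((1 : G) : G ⧸ H) := by
            rw [MulAction.Quotient.smul_mk, smul_eq_mul, inv_mul_cancel]
          rw [h2] at h1
          exact h1
      · rw [Submodule.span_le, Set.singleton_subset_iff]
        refine Submodule.mem_inf.mpr ⟨hmem1 _, (Submodule.mem_iInf _).mpr fun g => ?_⟩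
        show (DW.cosetYD H ω hnorm).act g 1 = (1 : (G ⧸ H) → k)
        rfl
    rw [hsub]
    apply finrank_span_singleton
    intro h
    have h1 := congrFun h ((1 : G) : G ⧸ H)
    rw [Pi.one_apply, Pi.zero_apply] at h1
    exact one_ne_zero h1
  -- comultiplication is a morphism
  · intro T hT
    constructor
    · intro d v hv
      rcases eq_or_ne d 1 with rfl | hd
      · rw [hTgr1 T hT]
        trivial
      · rw [hmem0 d hd v hv, map_zero]
        exact Submodule.zero_mem _
    · intro g
      apply DW.pi_map_ext H
      intro x
      simp only [LinearMap.comp_apply, DW.cosetYD_act, DW.cosetAct_single,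
        DW.AHcomul_single, hTact T hT]
  -- counit is invariant
  · intro g
    apply DW.pi_map_ext H
    intro x
    simp only [LinearMap.comp_apply, DW.cosetYD_act, DW.cosetAct_single,
      DW.AHcounit_single]
  -- counit vanishes in degree ≠ 1
  · intro d hd v hv
    rw [hmem0 d hd v hv, map_zero]
  -- coassociativity
  · intro a ha
    apply DW.pi_map_ext (P := ((G ⧸ H) → k) ⊗[k] (((G ⧸ H) → k) ⊗[k] ((G ⧸ H) → k))) H
    intro x
    simp only [LinearMap.comp_apply, DW.AHcomul_single, TensorProduct.map_tmul,
      LinearMap.id_apply, hassoc a ha]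
  -- left counitality
  · apply DW.pi_map_ext H
    intro x
    simp only [LinearMap.comp_apply, DW.AHcomul_single, TensorProduct.map_tmul,
      DW.AHcounit_single, LinearMap.id_apply, LinearEquiv.coe_coe,
      TensorProduct.lid_tmul, one_smul]
  -- right counitality
  · apply DW.pi_map_ext H
    intro x
    simp only [LinearMap.comp_apply, DW.AHcomul_single, TensorProduct.map_tmul,
      DW.AHcounit_single, LinearMap.id_apply, LinearEquiv.coe_coe,
      TensorProduct.rid_tmul, one_smul]
  -- Frobenius compatibility
  · intro a a' ha ha'
    constructor
    · apply DW.tensor_ext (P := ((G ⧸ H) → k) ⊗[k] ((G ⧸ H) → k)) H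
      intro x y
      simp only [LinearMap.comp_apply, TensorProduct.map_tmul, LinearMap.id_apply,
        DW.AHcomul_single, hassoc' a' ha', LinearMap.mul'_apply, DW.single_mul_single]
      rcases eq_or_ne x y with rfl | hxy
      · simp only [eq_self_iff_true, if_true, DW.AHcomul_single]
      · simp only [if_neg hxy, map_zero, TensorProduct.zero_tmul]
    · apply DW.tensor_ext (P := ((G ⧸ H) → k) ⊗[k] ((G ⧸ H) → k)) H
      intro x y
      simp only [LinearMap.comp_apply, LinearMap.mul'_apply, TensorProduct.map_tmul,
        LinearMap.id_apply, DW.AHcomul_single, hassoc a ha, DW.single_mul_single]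
      rcases eq_or_ne x y with rfl | hxy
      · simp only [eq_self_iff_true, if_true, DW.AHcomul_single]
      · simp only [if_neg hxy, map_zero, TensorProduct.tmul_zero]
  -- quantum dimension
  · have h1 : LinearMap.mul' k ((G ⧸ H) → k) (AHcomul k H (1 : (G ⧸ H) → k))
        = (1 : (G ⧸ H) → k) := by
      have := LinearMap.congr_fun hspecial (1 : (G ⧸ H) → k)
      rwa [LinearMap.comp_apply, LinearMap.id_apply] at this
    rw [h1, hcounit1]
end

section
/- Given classification data (H, N, ω, κ, ε), the object B(N,κ,ε) is a connected commutative algebra in Z(Vect_H^ω); if moreover |N| is invertible in k, then B(N,κ,ε) is a rigid Frobenius algebra, with comultiplication Δ(e_n) = Σ_{m∈N} κ(m,m⁻¹n)·e_m⊗e_{m⁻¹n} and counit ε_B(e_n) = δ_{n,1}, satisfying m∘Δ = |N|·id and ε_B(1_B) = 1. -/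
open scoped TensorProduct

open DW

set_option linter.unusedSectionVars false
set_option linter.unusedTactic false
set_option maxHeartbeats 1600000

namespace DWAux

open DW Finsupp Submodule

variable {k : Type*} [Field k] {H : Type*} [Group H] [DecidableEq H]
variable (N : Subgroup H) (hN : N.Normal)

/-- conjugation inside `N`. -/
def cj (h : H) (n : ↥N) : ↥N := ⟨h * ↑n * h⁻¹, hN.conj_mem ↑n n.2 h⟩

lemma cj_coe (h : H) (n : ↥N) : (cj N hN h n : H) = h * ↑n * h⁻¹ := rfl

lemma cj_one (n : ↥N) : cj N hN 1 n = n := by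
  ext; simp [cj]

lemma cj_cj (h g : H) (n : ↥N) : cj N hN h (cj N hN g n) = cj N hN (h * g) n := by
  ext; simp [cj]; group

lemma cj_mul (h : H) (n m : ↥N) : cj N hN h (n * m) = cj N hN h n * cj N hN h m := by
  ext; show h * ((n : H) * (m : H)) * h⁻¹ = (h * (n : H) * h⁻¹) * (h * (m : H) * h⁻¹); group

/-- the grading of `B`. -/
def grB (d : H) : Submodule k (↥N →₀ k) := Finsupp.supported k k {n : ↥N | ↑n = d}

lemma bGen_def (n : ↥N) : bGen k N n = Finsupp.single n 1 := rfl

lemma grB_eq_span (d : H) :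
    grB (k := k) N d = span k {x | ∃ n : ↥N, ↑n = d ∧ x = bGen k N n} := by
  rw [grB, Finsupp.supported_eq_span_single]
  congr 1
  ext x
  simp only [Set.mem_image, Set.mem_setOf_eq, bGen_def]
  exact ⟨fun ⟨n, h1, h2⟩ => ⟨n, h1, h2.symm⟩, fun ⟨n, h1, h2⟩ => ⟨n, h1, h2.symm⟩⟩

lemma grB_coe (n : ↥N) : grB (k := k) N (↑n) = k ∙ bGen k N n := by
  rw [grB_eq_span]
  congr 1
  ext x
  simp only [Set.mem_setOf_eq, Set.mem_singleton_iff]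
  constructor
  · rintro ⟨m, hm, rfl⟩
    rw [Subtype.coe_injective hm]
  · rintro rfl
    exact ⟨n, rfl, rfl⟩

lemma bGen_mem (n : ↥N) : bGen k N n ∈ grB (k := k) N (↑n) := by
  rw [grB_coe]; exact mem_span_singleton_self _

lemma grB_bot {d : H} (hd : d ∉ N) : grB (k := k) N d = ⊥ := by
  rw [grB_eq_span]
  convert span_empty
  ext x
  simp only [Set.mem_setOf_eq, Set.mem_empty_iff_false, iff_false]
  rintro ⟨n, rfl, -⟩
  exact hd n.2

lemma grB_elim {d : H} {v : ↥N →₀ k} (hv : v ∈ grB (k := k) N d) :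
    v = 0 ∨ ∃ (n : ↥N) (c : k), ↑n = d ∧ v = c • bGen k N n := by
  by_cases hd : d ∈ N
  · rw [show d = ((⟨d, hd⟩ : ↥N) : H) from rfl, grB_coe, mem_span_singleton] at hv
    obtain ⟨c, rfl⟩ := hv
    exact Or.inr ⟨⟨d, hd⟩, c, rfl, rfl⟩
  · rw [grB_bot N hd, mem_bot] at hv
    exact Or.inl hv

lemma iSup_grB : ⨆ d : H, grB (k := k) N d = ⊤ := by
  rw [eq_top_iff]
  intro v _
  induction v using Finsupp.induction with
  | zero => exact zero_mem _
  | single_add n b f _ _ ih =>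
      refine add_mem ?_ (ih Submodule.mem_top)
      refine le_iSup (grB (k := k) N) (↑n : H) ?_
      rw [grB_coe, bGen_def]
      exact mem_span_singleton.2 ⟨b, by simp [Finsupp.smul_single]⟩

lemma indep_grB : iSupIndep (grB (k := k) N) := by
  rw [iSupIndep_def]
  intro d
  refine Disjoint.mono_right ?_
    (Finsupp.disjoint_supported_supported (s := {n : ↥N | ↑n = d})
      (t := {n : ↥N | ↑n ≠ d}) ?_)
  · refine iSup_le fun d' => iSup_le fun hd' => Finsupp.supported_mono ?_
    intro n hn
    simp only [Set.mem_setOf_eq] at hn ⊢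
    rw [hn]; exact hd'
  · rw [Set.disjoint_left]
    intro n hn hn'
    exact hn' hn

lemma internal_grB : DirectSum.IsInternal (grB (k := k) N) :=
  DirectSum.isInternal_submodule_of_iSupIndep_of_iSup_eq_top (indep_grB N) (iSup_grB N)

end DWAux
namespace DWAux

open DW Finsupp Submodule

variable {k : Type*} [Field k] {H : Type*} [Group H] [DecidableEq H]
variable (N : Subgroup H) (hN : N.Normal) (ε : H → H → kˣ)

/-- the action of `B`. -/
noncomputable def actB (h : H) : (↥N →₀ k) →ₗ[k] (↥N →₀ k) :=
  Finsupp.lsum k fun n => ((ε h ↑n : kˣ) : k) • Finsupp.lsingle (cj N hN h n)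

lemma actB_single (h : H) (n : ↥N) (b : k) :
    actB N hN ε h (Finsupp.single n b)
      = ((ε h ↑n : kˣ) : k) • Finsupp.single (cj N hN h n) b := by
  simp [actB]

lemma actB_gen (h : H) (n : ↥N) :
    actB N hN ε h (bGen k N n) = ((ε h ↑n : kˣ) : k) • bGen k N (cj N hN h n) :=
  actB_single N hN ε h n 1

-- sample scalar test
example (u v w : kˣ) (h : u = v * w⁻¹ * v) : u * w = v * v := by
  rw [Units.ext_iff]
  push_cast [h]
  field_simp
  try ring

/-- extensionality on the basis of `B`. -/
lemma extB {P : Type*} [AddCommMonoid P] [Module k P] {f g : (↥N →₀ k) →ₗ[k] P}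
    (h : ∀ n : ↥N, f (bGen k N n) = g (bGen k N n)) : f = g := by
  refine Finsupp.lhom_ext' fun n => ?_
  apply LinearMap.ext_ring
  simpa [bGen_def] using h n

lemma extB2 {P : Type*} [AddCommMonoid P] [Module k P]
    {f g : (↥N →₀ k) ⊗[k] (↥N →₀ k) →ₗ[k] P}
    (h : ∀ n m : ↥N, f (bGen k N n ⊗ₜ[k] bGen k N m) = g (bGen k N n ⊗ₜ[k] bGen k N m)) :
    f = g := by
  refine TensorProduct.ext (extB N fun n => extB N fun m => ?_)
  simpa using h n m

lemma extB3l {P : Type*} [AddCommMonoid P] [Module k P]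
    {f g : ((↥N →₀ k) ⊗[k] (↥N →₀ k)) ⊗[k] (↥N →₀ k) →ₗ[k] P}
    (h : ∀ n m l : ↥N, f ((bGen k N n ⊗ₜ[k] bGen k N m) ⊗ₜ[k] bGen k N l)
        = g ((bGen k N n ⊗ₜ[k] bGen k N m) ⊗ₜ[k] bGen k N l)) : f = g := by
  refine TensorProduct.ext (extB2 N fun n m => extB N fun l => ?_)
  simpa using h n m l

lemma extB3r {P : Type*} [AddCommMonoid P] [Module k P]
    {f g : (↥N →₀ k) ⊗[k] ((↥N →₀ k) ⊗[k] (↥N →₀ k)) →ₗ[k] P}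
    (h : ∀ n m l : ↥N, f (bGen k N n ⊗ₜ[k] (bGen k N m ⊗ₜ[k] bGen k N l))
        = g (bGen k N n ⊗ₜ[k] (bGen k N m ⊗ₜ[k] bGen k N l))) : f = g := by
  refine TensorProduct.ext (extB N fun n => extB2 N fun m l => ?_)
  simpa using h n m l

end DWAux
namespace DWAux

open DW Finsupp Submodule

variable {k : Type*} [Field k] {H : Type*} [Group H] [DecidableEq H]
variable {ω : H → H → H → kˣ} (N : Subgroup H) (hN : N.Normal) {κ ε : H → H → kˣ}

section data

variable (hdata : ClassData ω N κ ε) (hnorm : IsNormalized ω)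
include hdata

lemma kappa_one_right (n : ↥N) : κ ↑n 1 = 1 := (hdata.1 ↑n n.2).1

lemma kappa_one_left (n : ↥N) : κ 1 ↑n = 1 := (hdata.1 ↑n n.2).2

include hnorm

lemma eps_h_one (h : H) : ε h 1 = 1 := by
  have hc : h * 1 * h⁻¹ = 1 := by group
  have hg : gamc ω h 1 1 = 1 := by
    rw [gamc, hc, hnorm h 1 1 (by tauto), hnorm 1 1 h (by tauto), hnorm 1 h 1 (by tauto)]
    simp
  have := hdata.2.2.2.1 h 1 N.one_mem 1 N.one_mem
  rw [hg, hc, mul_one] at this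
  have h1 : (1 : kˣ) = (ε h 1)⁻¹ := by
    rw [this]; group
  exact inv_eq_one.mp h1.symm

lemma eps_one_act (n : ↥N) : ε 1 ↑n = 1 := by
  have ht : tauc ω 1 1 ↑n = 1 := by
    rw [tauc, hnorm 1 1 ↑n (by tauto), hnorm _ 1 1 (by tauto), hnorm 1 _ 1 (by tauto)]
    simp
  have := hdata.2.2.1 1 1 ↑n n.2
  rw [ht] at this
  simp only [one_mul, mul_one, inv_one] at this
  have h1 : (1 : kˣ) = ε 1 ↑n := by
    rw [this]; group
  exact h1.symm

/-- the Yetter–Drinfeld structure of `B`. -/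
noncomputable def SB : YDOn k ω (↥N →₀ k) where
  grading := grB N
  internal := internal_grB N
  act := actB N hN ε
  act_one := by
    refine extB N fun n => ?_
    rw [actB_gen, eps_one_act N hdata hnorm, cj_one]
    simp
  act_mem := by
    intro g d v hv
    rcases grB_elim N hv with rfl | ⟨n, c, rfl, rfl⟩
    · simp only [map_zero]; exact zero_mem _
    · rw [map_smul, actB_gen, ← cj_coe N hN, grB_coe]
      exact smul_mem _ _ (smul_mem _ _ (mem_span_singleton_self _))
  act_act := by
    intro h g d v hv
    rcases grB_elim N hv with rfl | ⟨n, c, rfl, rfl⟩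
    · simp
    · have key : ((ε h (g * ↑n * g⁻¹) * ε g ↑n : kˣ) : k)
          = ((tauc ω h g ↑n * ε (h * g) ↑n : kˣ) : k) := by
        congr 1
        rw [hdata.2.2.1 h g ↑n n.2]; group
      push_cast at key
      simp only [map_smul, actB_gen, cj_cj, smul_smul, cj_coe]
      congr 1
      linear_combination c * key

lemma isBStruct : IsBStruct ω N hN ε (SB N hN hdata hnorm) :=
  ⟨fun d => grB_eq_span N d, fun h n => actB_gen N hN ε h n⟩

end data

end DWAux
namespace DWAux

open DW Finsupp Submodule

variable {k : Type*} [Field k] {H : Type*} [Group H] [DecidableEq H]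
variable {ω : H → H → H → kˣ} (N : Subgroup H) (hN : N.Normal) {κ ε : H → H → kˣ}

/-- the multiplication of `B`, as a bilinear map. -/
noncomputable def mulBil (κ : H → H → kˣ) :
    (↥N →₀ k) →ₗ[k] (↥N →₀ k) →ₗ[k] (↥N →₀ k) :=
  Finsupp.lsum k fun n => LinearMap.toSpanSingleton k _
    (Finsupp.lsum k fun m => (((κ ↑n ↑m)⁻¹ : kˣ) : k) • Finsupp.lsingle (n * m))

/-- the multiplication of `B`. -/
noncomputable def mulB (κ : H → H → kˣ) :
    (↥N →₀ k) ⊗[k] (↥N →₀ k) →ₗ[k] (↥N →₀ k) :=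
  TensorProduct.lift (mulBil N κ)

lemma mulB_gen (n m : ↥N) :
    mulB N κ (bGen k N n ⊗ₜ[k] bGen k N m)
      = (((κ ↑n ↑m)⁻¹ : kˣ) : k) • bGen k N (n * m) := by
  simp [mulB, mulBil, bGen_def]

lemma isBMul : IsBMul N κ (mulB N κ) := fun n m => mulB_gen N n m

section data

variable (hdata : ClassData ω N κ ε) (hnorm : IsNormalized ω)
include hdata hnorm

lemma SB_grading : (SB N hN hdata hnorm).grading = grB (k := k) N := rfl

lemma SB_act : (SB N hN hdata hnorm).act = actB N hN ε := rfl

lemma mul_hom (T : YDOn k ω ((↥N →₀ k) ⊗[k] (↥N →₀ k)))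
    (hT : IsTensorStruct (SB N hN hdata hnorm) (SB N hN hdata hnorm) T) :
    IsYDHom T (SB N hN hdata hnorm) (mulB N κ) := by
  constructor
  · intro d v hv
    rw [hT.1 d] at hv
    show mulB N κ v ∈ grB N d
    suffices hle : (⨆ a : H, Submodule.map₂ (TensorProduct.mk k _ _)
        ((SB N hN hdata hnorm).grading a) ((SB N hN hdata hnorm).grading (a⁻¹ * d)))
          ≤ (grB N d).comap (mulB N κ) from hle hv
    refine iSup_le fun a => Submodule.map₂_le.2 fun x hx y hy => ?_
    simp only [mem_comap, TensorProduct.mk_apply]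
    rw [SB_grading] at hx hy
    rcases grB_elim N hx with rfl | ⟨n, c, hn, rfl⟩
    · simp only [TensorProduct.zero_tmul, map_zero]; exact zero_mem _
    rcases grB_elim N hy with rfl | ⟨m, c', hm, rfl⟩
    · simp only [TensorProduct.tmul_zero, map_zero]; exact zero_mem _
    have hd : (↑(n * m) : H) = d := by
      rw [Subgroup.coe_mul, hn, hm, mul_inv_cancel_left]
    rw [← hd]
    simp only [← TensorProduct.smul_tmul', TensorProduct.tmul_smul, map_smul, mulB_gen]
    rw [grB_coe]
    exact smul_mem _ _ (smul_mem _ _ (smul_mem _ _ (mem_span_singleton_self _)))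
  · intro h
    refine extB2 N fun n m => ?_
    have key : ((gamc ω h ↑n ↑m * (ε h ↑n * ε h ↑m) * (κ (h * ↑n * h⁻¹) (h * ↑m * h⁻¹))⁻¹
          : kˣ) : k)
        = (((κ ↑n ↑m)⁻¹ * ε h (↑n * ↑m) : kˣ) : k) := by
      congr 1
      rw [hdata.2.2.2.1 h ↑n n.2 ↑m m.2, Units.ext_iff]
      push_cast
      field_simp
      try ring
    simp only [LinearMap.coe_comp, Function.comp_apply]
    rw [hT.2 h ↑n ↑m _ _ (bGen_mem N n) (bGen_mem N m)]
    simp only [SB_act, map_smul, actB_gen, ← TensorProduct.smul_tmul',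
      TensorProduct.tmul_smul, map_smul, mulB_gen, smul_smul, ← cj_mul]
    congr 1
    push_cast [cj_coe] at key ⊢
    linear_combination key

end data

end DWAux
namespace DWAux

open DW Finsupp Submodule

variable {k : Type*} [Field k] {H : Type*} [Group H] [DecidableEq H]
variable {ω : H → H → H → kˣ} (N : Subgroup H) (hN : N.Normal) {κ ε : H → H → kˣ}

lemma bGen_ne_zero (n : ↥N) : bGen k N n ≠ 0 := by
  rw [bGen_def]
  intro h
  exact one_ne_zero (Finsupp.single_eq_zero.mp h)

lemma cj_one_right (h : H) : cj N hN h 1 = 1 := by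
  ext; simp [cj]

section data

variable (hdata : ClassData ω N κ ε) (hnorm : IsNormalized ω)
include hdata hnorm

lemma unit_mem : bGen k N 1 ∈ (SB N hN hdata hnorm).grading 1 := by
  rw [SB_grading]
  simpa using bGen_mem N (1 : ↥N)

lemma unit_fixed (h : H) : (SB N hN hdata hnorm).act h (bGen k N 1) = bGen k N 1 := by
  rw [SB_act, actB_gen, cj_one_right]
  have : ε h ↑(1 : ↥N) = 1 := by
    rw [OneMemClass.coe_one]
    exact eps_h_one N hdata hnorm h
  rw [this]
  simp

lemma unit_mul (x : ↥N →₀ k) :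
    mulB N κ (bGen k N 1 ⊗ₜ[k] x) = x ∧ mulB N κ (x ⊗ₜ[k] bGen k N 1) = x := by
  constructor
  · have : mulB N κ ∘ₗ TensorProduct.mk k (↥N →₀ k) (↥N →₀ k) (bGen k N 1)
        = LinearMap.id := by
      refine extB N fun m => ?_
      simp only [LinearMap.coe_comp, Function.comp_apply, TensorProduct.mk_apply,
        mulB_gen, LinearMap.id_coe, id_eq, one_mul]
      have : κ ↑(1 : ↥N) ↑m = 1 := by
        rw [OneMemClass.coe_one]; exact kappa_one_left N hdata m
      rw [this]
      simp
    exact LinearMap.congr_fun this x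
  · have : mulB N κ ∘ₗ (TensorProduct.mk k (↥N →₀ k) (↥N →₀ k)).flip (bGen k N 1)
        = LinearMap.id := by
      refine extB N fun m => ?_
      simp only [LinearMap.coe_comp, Function.comp_apply, LinearMap.flip_apply,
        TensorProduct.mk_apply, mulB_gen, LinearMap.id_coe, id_eq, mul_one]
      have : κ ↑m ↑(1 : ↥N) = 1 := by
        rw [OneMemClass.coe_one]; exact kappa_one_right N hdata m
      rw [this]
      simp
    exact LinearMap.congr_fun this x

lemma mul_assocB (a : ((↥N →₀ k) ⊗[k] (↥N →₀ k)) ⊗[k] (↥N →₀ k)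
      →ₗ[k] (↥N →₀ k) ⊗[k] ((↥N →₀ k) ⊗[k] (↥N →₀ k)))
    (ha : IsAssocMap (SB N hN hdata hnorm) (SB N hN hdata hnorm) (SB N hN hdata hnorm) a) :
    mulB N κ ∘ₗ TensorProduct.map (mulB N κ) LinearMap.id
      = mulB N κ ∘ₗ TensorProduct.map LinearMap.id (mulB N κ) ∘ₗ a := by
  refine extB3l N fun n m l => ?_
  have key : ((((κ ↑n ↑m)⁻¹ * (κ (↑n * ↑m) ↑l)⁻¹ : kˣ)) : k)
      = ((((ω ↑n ↑m ↑l)⁻¹ * ((κ ↑m ↑l)⁻¹ * (κ ↑n (↑m * ↑l))⁻¹) : kˣ)) : k) := by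
    congr 1
    rw [hdata.2.1 ↑n n.2 ↑m m.2 ↑l l.2, Units.ext_iff]
    push_cast
    field_simp
    try ring
  have ha' := ha ↑n ↑m ↑l _ _ _ (bGen_mem N n) (bGen_mem N m) (bGen_mem N l)
  simp only [LinearMap.coe_comp, Function.comp_apply, TensorProduct.map_tmul,
    LinearMap.id_coe, id_eq, mulB_gen, ← TensorProduct.smul_tmul',
    TensorProduct.tmul_smul, map_smul, ha', smul_smul, mul_assoc]
  congr 1
  all_goals (push_cast at key ⊢; linear_combination key)

lemma mul_commB (c : (↥N →₀ k) ⊗[k] (↥N →₀ k) →ₗ[k] (↥N →₀ k) ⊗[k] (↥N →₀ k))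
    (hc : IsBraidingMap (SB N hN hdata hnorm) (SB N hN hdata hnorm) c) :
    mulB N κ ∘ₗ c = mulB N κ := by
  refine extB2 N fun n m => ?_
  have key0 : (ε ↑n ↑m * (κ (↑n * ↑m * (↑n)⁻¹) ↑n)⁻¹ : kˣ) = (κ ↑n ↑m)⁻¹ := by
    rw [hdata.2.2.2.2 ↑n n.2 ↑m m.2, mul_inv, mul_inv_cancel_left]
  have key := congrArg Units.val key0
  simp only [LinearMap.coe_comp, Function.comp_apply]
  rw [hc ↑n (bGen k N n) (bGen k N m) (bGen_mem N n)]
  have hcj : cj N hN (↑n) m * n = n * m := by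
    ext; show ((n : H) * (m : H) * (n : H)⁻¹) * (n : H) = (n : H) * (m : H); group
  simp only [SB_act, actB_gen, ← TensorProduct.smul_tmul', map_smul, mulB_gen,
    smul_smul, hcj, cj_coe]
  congr 1
  all_goals (push_cast at key ⊢; linear_combination key)

lemma connectedB :
    Module.finrank k ↥((SB N hN hdata hnorm).grading 1 ⊓ ⨅ h : H,
      LinearMap.eqLocus ((SB N hN hdata hnorm).act h)
        (LinearMap.id : (↥N →₀ k) →ₗ[k] (↥N →₀ k))) = 1 := by
  have hP : (SB N hN hdata hnorm).grading 1 ⊓ (⨅ h : H,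
      LinearMap.eqLocus ((SB N hN hdata hnorm).act h)
        (LinearMap.id : (↥N →₀ k) →ₗ[k] (↥N →₀ k))) = k ∙ bGen k N 1 := by
    refine le_antisymm ?_ ?_
    · refine le_trans inf_le_left ?_
      rw [SB_grading]
      have := grB_coe (k := k) N (1 : ↥N)
      rw [OneMemClass.coe_one] at this
      rw [this]
    · rw [span_singleton_le_iff_mem]
      refine mem_inf.2 ⟨unit_mem N hN hdata hnorm, (mem_iInf _).2 fun h => ?_⟩
      show (SB N hN hdata hnorm).act h (bGen k N 1) = bGen k N 1
      exact unit_fixed N hN hdata hnorm h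
  rw [hP]
  exact finrank_span_singleton (bGen_ne_zero N 1)

end data

end DWAux
namespace DWAux

open DW Finsupp Submodule

variable {k : Type*} [Field k] {H : Type*} [Group H] [DecidableEq H]
variable {ω : H → H → H → kˣ} (N : Subgroup H) (hN : N.Normal) {κ ε : H → H → kˣ}
variable [Fintype ↥N] [DecidableEq ↥N]

/-- the comultiplication of `B`. -/
noncomputable def DeltaB (κ : H → H → kˣ) :
    (↥N →₀ k) →ₗ[k] (↥N →₀ k) ⊗[k] (↥N →₀ k) :=
  Finsupp.lsum k fun n => LinearMap.toSpanSingleton k _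
    (∑ m : ↥N, ((κ ↑m (↑m⁻¹ * ↑n) : kˣ) : k) • (bGen k N m ⊗ₜ[k] bGen k N (m⁻¹ * n)))

lemma DeltaB_gen (n : ↥N) :
    DeltaB N κ (bGen k N n)
      = ∑ m : ↥N, ((κ ↑m (↑m⁻¹ * ↑n) : kˣ) : k) • (bGen k N m ⊗ₜ[k] bGen k N (m⁻¹ * n)) := by
  simp [DeltaB, bGen_def]

/-- the counit of `B`. -/
noncomputable def epsB : (↥N →₀ k) →ₗ[k] k := Finsupp.lapply 1

lemma epsB_gen (n : ↥N) : epsB N (bGen k N n) = if n = 1 then 1 else 0 := by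
  simp [epsB, bGen_def, Finsupp.single_apply, eq_comm]

lemma cj_eq_one_iff (h : H) (n : ↥N) : cj N hN h n = 1 ↔ n = 1 := by
  constructor
  · intro hc
    have hval : h * ↑n * h⁻¹ = 1 := by
      have := congrArg (Subtype.val) hc
      simpa [cj] using this
    have hn1 : (↑n : H) = 1 := by
      have h2 : (↑n : H) = h⁻¹ * (h * ↑n * h⁻¹) * h := by group
      rw [h2, hval]; group
    ext
    rw [hn1, OneMemClass.coe_one]
  · rintro rfl
    exact cj_one_right N hN h

section data

variable (hdata : ClassData ω N κ ε) (hnorm : IsNormalized ω)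
include hdata hnorm

lemma eps_hom (h : H) :
    epsB N ∘ₗ (SB N hN hdata hnorm).act h = epsB N := by
  refine extB N fun n => ?_
  simp only [LinearMap.coe_comp, Function.comp_apply, SB_act, actB_gen,
    map_smul, epsB_gen, smul_eq_mul, cj_eq_one_iff]
  by_cases hn : n = 1
  · subst hn
    simp [eps_h_one N hdata hnorm h]
  · simp [hn]

lemma eps_vanish (d : H) (hd : d ≠ 1) (v : ↥N →₀ k)
    (hv : v ∈ (SB N hN hdata hnorm).grading d) : epsB N v = 0 := by
  rw [SB_grading] at hv
  rcases grB_elim N hv with rfl | ⟨n, c, hn, rfl⟩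
  · simp
  · have : n ≠ 1 := by
      rintro rfl
      rw [OneMemClass.coe_one] at hn
      exact hd hn.symm
    simp [epsB_gen, this]

lemma counit_left :
    (TensorProduct.lid k (↥N →₀ k)).toLinearMap
        ∘ₗ TensorProduct.map (epsB N) LinearMap.id ∘ₗ DeltaB N κ = LinearMap.id := by
  refine extB N fun n => ?_
  simp only [LinearMap.coe_comp, Function.comp_apply, DeltaB_gen, map_sum, map_smul,
    TensorProduct.map_tmul, LinearMap.id_coe, id_eq, epsB_gen, LinearMap.coe_mk,
    LinearEquiv.coe_coe, TensorProduct.lid_tmul]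
  rw [Finset.sum_eq_single (1 : ↥N)]
  · have h1 : κ 1 ↑n = 1 := kappa_one_left N hdata n
    simp [h1]
  · intro m _ hm
    simp [hm]
  · intro hmem
    exact absurd (Finset.mem_univ _) hmem

lemma counit_right :
    (TensorProduct.rid k (↥N →₀ k)).toLinearMap
        ∘ₗ TensorProduct.map LinearMap.id (epsB N) ∘ₗ DeltaB N κ = LinearMap.id := by
  refine extB N fun n => ?_
  simp only [LinearMap.coe_comp, Function.comp_apply, DeltaB_gen, map_sum, map_smul,
    TensorProduct.map_tmul, LinearMap.id_coe, id_eq, epsB_gen, LinearMap.coe_mk,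
    LinearEquiv.coe_coe, TensorProduct.rid_tmul]
  rw [Finset.sum_eq_single n]
  · have h0 : n⁻¹ * n = 1 := by group
    have h1 : κ ↑n 1 = 1 := kappa_one_right N hdata n
    simp [h0, h1]
  · intro m _ hm
    have : m⁻¹ * n ≠ 1 := by
      intro hcon
      rw [inv_mul_eq_one] at hcon
      exact hm hcon
    simp [this]
  · intro hmem
    exact absurd (Finset.mem_univ _) hmem

lemma specialB :
    mulB N κ ∘ₗ DeltaB N κ = ((Nat.card ↥N : k)) • LinearMap.id := by
  refine extB N fun n => ?_
  simp only [LinearMap.coe_comp, Function.comp_apply, DeltaB_gen, map_sum, map_smul,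
    mulB_gen, LinearMap.smul_apply, LinearMap.id_coe, id_eq, smul_smul]
  have hterm : ∀ m : ↥N, ((κ ↑m (↑m⁻¹ * ↑n) : kˣ) : k) * ((κ ↑m ↑(m⁻¹ * n))⁻¹ : kˣ)
      = 1 := by
    intro m
    have : (↑(m⁻¹ * n) : H) = ↑m⁻¹ * ↑n := by push_cast; rfl
    rw [this]
    push_cast
    field_simp
  have hidx : ∀ m : ↥N, m * (m⁻¹ * n) = n := by intro m; group
  simp only [hterm, hidx, one_smul]
  rw [Finset.sum_const, Nat.card_eq_fintype_card, Finset.card_univ]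
  exact (Nat.cast_smul_eq_nsmul k _ _).symm

lemma epsB_one : epsB N (bGen k N (1 : ↥N)) = 1 := by
  simp [epsB_gen]

end data

end DWAux
namespace DWAux

open DW Finsupp Submodule

variable {k : Type*} [Field k] {H : Type*} [Group H] [DecidableEq H]
variable {ω : H → H → H → kˣ} (N : Subgroup H) (hN : N.Normal) {κ ε : H → H → kˣ}
variable [Fintype ↥N] [DecidableEq ↥N]

/-- conjugation as an equivalence of `N`. -/
def cjE (h : H) : ↥N ≃ ↥N where
  toFun := cj N hN h
  invFun := cj N hN h⁻¹
  left_inv := fun n => by ext; simp [cj]; group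
  right_inv := fun n => by ext; simp [cj]; group

lemma cjE_apply (h : H) (n : ↥N) : cjE N hN h n = cj N hN h n := rfl

lemma cj_inv_mul (h : H) (m n : ↥N) :
    (cj N hN h m)⁻¹ * cj N hN h n = cj N hN h (m⁻¹ * n) := by
  ext; simp [cj]; group

section data

variable (hdata : ClassData ω N κ ε) (hnorm : IsNormalized ω)
include hdata hnorm

lemma delta_hom (T : YDOn k ω ((↥N →₀ k) ⊗[k] (↥N →₀ k)))
    (hT : IsTensorStruct (SB N hN hdata hnorm) (SB N hN hdata hnorm) T) :
    IsYDHom (SB N hN hdata hnorm) T (DeltaB N κ) := by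
  constructor
  · intro d v hv
    rw [SB_grading] at hv
    rcases grB_elim N hv with rfl | ⟨n, c, rfl, rfl⟩
    · simp only [map_zero]; exact zero_mem _
    · rw [map_smul]
      refine smul_mem _ _ ?_
      rw [DeltaB_gen, hT.1]
      refine sum_mem fun m _ => smul_mem _ _ ?_
      refine le_iSup (fun a : H => Submodule.map₂ (TensorProduct.mk k _ _)
        ((SB N hN hdata hnorm).grading a) ((SB N hN hdata hnorm).grading (a⁻¹ * ↑n)))
        (↑m : H) ?_
      exact Submodule.apply_mem_map₂ _ (bGen_mem N m) (bGen_mem N (m⁻¹ * n))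
  · intro h
    apply extB (P := (↥N →₀ k) ⊗[k] (↥N →₀ k)) N
    intro n
    have hterm : ∀ m : ↥N,
        T.act h (bGen k N m ⊗ₜ[k] bGen k N (m⁻¹ * n))
          = ((gamc ω h ↑m ↑(m⁻¹ * n) : kˣ) : k) •
            (actB N hN ε h (bGen k N m) ⊗ₜ[k] actB N hN ε h (bGen k N (m⁻¹ * n))) :=
      fun m => hT.2 h ↑m ↑(m⁻¹ * n) _ _ (bGen_mem N m) (bGen_mem N (m⁻¹ * n))
    simp only [LinearMap.coe_comp, Function.comp_apply, SB_act, actB_gen, map_smul,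
      DeltaB_gen, map_sum, hterm, ← TensorProduct.smul_tmul',
      TensorProduct.tmul_smul, smul_smul, Finset.smul_sum]
    refine (Fintype.sum_equiv (cjE N hN h) _ _ fun m => ?_).symm
    simp only [cjE_apply, cj_inv_mul]
    have key : ((κ ↑m (↑m⁻¹ * ↑n) * (gamc ω h ↑m (↑m⁻¹ * ↑n) * (ε h ↑m * ε h (↑m⁻¹ * ↑n)))
          : kˣ) : k)
        = ((ε h ↑n * κ (h * ↑m * h⁻¹) (h * (↑m⁻¹ * ↑n) * h⁻¹) : kˣ) : k) := by
      congr 1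
      rw [hdata.2.2.2.1 h ↑m m.2 (↑m⁻¹ * ↑n) (mul_mem (inv_mem m.2) n.2), Units.ext_iff]
      push_cast [mul_inv_cancel_left]
      field_simp
      try ring
    push_cast [cj_coe] at key ⊢
    congr 1
    rw [show (h * (↑m : H) * h⁻¹)⁻¹ * (h * (↑n : H) * h⁻¹) = h * ((↑m : H)⁻¹ * ↑n) * h⁻¹
      by group]
    linear_combination key

end data

end DWAux
namespace DWAux

open DW Finsupp Submodule

variable {k : Type*} [Field k] {H : Type*} [Group H] [DecidableEq H]
variable {ω : H → H → H → kˣ} (N : Subgroup H) (hN : N.Normal) {κ ε : H → H → kˣ}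
variable [Fintype ↥N] [DecidableEq ↥N]

section data

variable (hdata : ClassData ω N κ ε) (hnorm : IsNormalized ω)
include hdata hnorm

lemma coassocB (a : ((↥N →₀ k) ⊗[k] (↥N →₀ k)) ⊗[k] (↥N →₀ k)
      →ₗ[k] (↥N →₀ k) ⊗[k] ((↥N →₀ k) ⊗[k] (↥N →₀ k)))
    (ha : IsAssocMap (SB N hN hdata hnorm) (SB N hN hdata hnorm) (SB N hN hdata hnorm) a) :
    a ∘ₗ TensorProduct.map (DeltaB N κ) LinearMap.id ∘ₗ DeltaB N κ
      = TensorProduct.map LinearMap.id (DeltaB N κ) ∘ₗ DeltaB N κ := by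
  apply extB (P := (↥N →₀ k) ⊗[k] ((↥N →₀ k) ⊗[k] (↥N →₀ k))) N
  intro n
  have ha' : ∀ l m : ↥N,
      a ((bGen k N l ⊗ₜ[k] bGen k N (l⁻¹ * m)) ⊗ₜ[k] bGen k N (m⁻¹ * n))
        = (((ω ↑l ↑(l⁻¹ * m) ↑(m⁻¹ * n))⁻¹ : kˣ) : k)
            • (bGen k N l ⊗ₜ[k] (bGen k N (l⁻¹ * m) ⊗ₜ[k] bGen k N (m⁻¹ * n))) :=
    fun l m => ha ↑l ↑(l⁻¹ * m) ↑(m⁻¹ * n) _ _ _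
      (bGen_mem N l) (bGen_mem N _) (bGen_mem N _)
  simp only [LinearMap.coe_comp, Function.comp_apply, DeltaB_gen, map_sum, map_smul,
    TensorProduct.map_tmul, LinearMap.id_coe, id_eq, DeltaB_gen,
    TensorProduct.sum_tmul, TensorProduct.tmul_sum, ← TensorProduct.smul_tmul',
    TensorProduct.tmul_smul, map_sum, map_smul, ha', smul_smul, Finset.smul_sum]
  rw [Finset.sum_comm]
  refine Finset.sum_congr rfl fun l _ => ?_
  refine (Fintype.sum_equiv (Equiv.mulLeft l) _ _ fun m => ?_).symm
  have e1 : l⁻¹ * (l * m) = m := by group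
  have e2 : (l * m)⁻¹ * n = m⁻¹ * (l⁻¹ * n) := by group
  have key : ((κ (↑l * ↑m) ((↑m)⁻¹ * ((↑l)⁻¹ * ↑n)) * κ ↑l ↑m
        * (ω ↑l ↑m ((↑m)⁻¹ * ((↑l)⁻¹ * ↑n)))⁻¹ : kˣ) : k)
      = ((κ ↑l ((↑l)⁻¹ * ↑n) * κ ↑m ((↑m)⁻¹ * ((↑l)⁻¹ * ↑n)) : kˣ) : k) := by
    congr 1
    rw [hdata.2.1 ↑l l.2 ↑m m.2 ((↑m)⁻¹ * ((↑l)⁻¹ * ↑n))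
      (mul_mem (inv_mem m.2) (mul_mem (inv_mem l.2) n.2)), Units.ext_iff]
    push_cast [mul_inv_rev, mul_assoc, inv_mul_cancel_left, mul_inv_cancel_left]
    field_simp
    try ring
  simp only [Equiv.coe_mulLeft, e1, e2]
  push_cast [mul_inv_rev, mul_assoc, inv_mul_cancel_left, mul_inv_cancel_left] at key ⊢
  all_goals (congr 1 <;> first | linear_combination key | linear_combination -key)

lemma frob1B (a' : (↥N →₀ k) ⊗[k] ((↥N →₀ k) ⊗[k] (↥N →₀ k))
      →ₗ[k] ((↥N →₀ k) ⊗[k] (↥N →₀ k)) ⊗[k] (↥N →₀ k))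
    (ha' : IsAssocInvMap (SB N hN hdata hnorm) (SB N hN hdata hnorm) (SB N hN hdata hnorm) a') :
    TensorProduct.map (mulB N κ) LinearMap.id ∘ₗ a'
        ∘ₗ TensorProduct.map LinearMap.id (DeltaB N κ) = DeltaB N κ ∘ₗ mulB N κ := by
  apply extB2 (P := (↥N →₀ k) ⊗[k] (↥N →₀ k)) N
  intro n p
  have ha2 : ∀ m : ↥N,
      a' (bGen k N n ⊗ₜ[k] (bGen k N m ⊗ₜ[k] bGen k N (m⁻¹ * p)))
        = ((ω ↑n ↑m ↑(m⁻¹ * p) : kˣ) : k)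
            • ((bGen k N n ⊗ₜ[k] bGen k N m) ⊗ₜ[k] bGen k N (m⁻¹ * p)) :=
    fun m => ha' ↑n ↑m ↑(m⁻¹ * p) _ _ _ (bGen_mem N n) (bGen_mem N m) (bGen_mem N _)
  simp only [LinearMap.coe_comp, Function.comp_apply, DeltaB_gen, map_sum, map_smul,
    TensorProduct.map_tmul, LinearMap.id_coe, id_eq, mulB_gen,
    TensorProduct.sum_tmul, TensorProduct.tmul_sum, ← TensorProduct.smul_tmul',
    TensorProduct.tmul_smul, map_sum, map_smul, ha2, smul_smul, DeltaB_gen,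
    Finset.smul_sum]
  refine Fintype.sum_equiv (Equiv.mulLeft n) _ _ fun m => ?_
  have e2 : (n * m)⁻¹ * (n * p) = m⁻¹ * p := by group
  have key : ((ω ↑n ↑m ((↑m)⁻¹ * ↑p) * (κ ↑m ((↑m)⁻¹ * ↑p) * (κ ↑n ↑m)⁻¹) : kˣ) : k)
      = (((κ ↑n ↑p)⁻¹ * κ (↑n * ↑m) ((↑m)⁻¹ * ↑p) : kˣ) : k) := by
    congr 1
    rw [hdata.2.1 ↑n n.2 ↑m m.2 ((↑m)⁻¹ * ↑p)
      (mul_mem (inv_mem m.2) p.2), Units.ext_iff]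
    push_cast [mul_inv_rev, mul_assoc, inv_mul_cancel_left, mul_inv_cancel_left]
    field_simp
    try ring
  simp only [Equiv.coe_mulLeft, e2]
  push_cast [mul_inv_rev, mul_assoc, inv_mul_cancel_left, mul_inv_cancel_left] at key ⊢
  all_goals (congr 1 <;> first | linear_combination key | linear_combination -key)

lemma frob2B (a : ((↥N →₀ k) ⊗[k] (↥N →₀ k)) ⊗[k] (↥N →₀ k)
      →ₗ[k] (↥N →₀ k) ⊗[k] ((↥N →₀ k) ⊗[k] (↥N →₀ k)))
    (ha : IsAssocMap (SB N hN hdata hnorm) (SB N hN hdata hnorm) (SB N hN hdata hnorm) a) :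
    DeltaB N κ ∘ₗ mulB N κ = TensorProduct.map LinearMap.id (mulB N κ) ∘ₗ a
        ∘ₗ TensorProduct.map (DeltaB N κ) LinearMap.id := by
  apply extB2 (P := (↥N →₀ k) ⊗[k] (↥N →₀ k)) N
  intro n p
  have ha2 : ∀ m : ↥N,
      a ((bGen k N m ⊗ₜ[k] bGen k N (m⁻¹ * n)) ⊗ₜ[k] bGen k N p)
        = (((ω ↑m ↑(m⁻¹ * n) ↑p)⁻¹ : kˣ) : k)
            • (bGen k N m ⊗ₜ[k] (bGen k N (m⁻¹ * n) ⊗ₜ[k] bGen k N p)) :=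
    fun m => ha ↑m ↑(m⁻¹ * n) ↑p _ _ _ (bGen_mem N m) (bGen_mem N _) (bGen_mem N p)
  simp only [LinearMap.coe_comp, Function.comp_apply, DeltaB_gen, map_sum, map_smul,
    TensorProduct.map_tmul, LinearMap.id_coe, id_eq, mulB_gen,
    TensorProduct.sum_tmul, TensorProduct.tmul_sum, ← TensorProduct.smul_tmul',
    TensorProduct.tmul_smul, map_sum, map_smul, ha2, smul_smul, DeltaB_gen,
    Finset.smul_sum]
  refine Finset.sum_congr rfl fun m _ => ?_
  have e2 : m⁻¹ * n * p = m⁻¹ * (n * p) := by group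
  have key : (((κ ↑n ↑p)⁻¹ * κ ↑m ((↑m)⁻¹ * (↑n * ↑p)) : kˣ) : k)
      = ((κ ↑m ((↑m)⁻¹ * ↑n) * ((ω ↑m ((↑m)⁻¹ * ↑n) ↑p)⁻¹
          * (κ ((↑m)⁻¹ * ↑n) ↑p)⁻¹) : kˣ) : k) := by
    congr 1
    rw [hdata.2.1 ↑m m.2 ((↑m)⁻¹ * ↑n) (mul_mem (inv_mem m.2) n.2) ↑p p.2, Units.ext_iff]
    push_cast [mul_inv_rev, mul_assoc, inv_mul_cancel_left, mul_inv_cancel_left]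
    field_simp
    try ring
  simp only [e2]
  push_cast [mul_inv_rev, mul_assoc, inv_mul_cancel_left, mul_inv_cancel_left] at key ⊢
  all_goals (congr 1 <;> first | linear_combination key | linear_combination -key)

end data

end DWAux

/-- Propositions 4.2 and 4.4: given classification data `(H, N, ω, κ, ε)`,
the twisted group algebra `B(N,κ,ε)` — with basis `{e_n : n ∈ N}`, grading `deg e_n = n`,
action `h·e_n = ε_h(n) e_{hnh⁻¹}` and multiplication `e_n e_m = κ(n,m)⁻¹ e_{nm}` — is a
connected commutative algebra in `Z(Vect_H^ω)`; if moreover `|N|` is invertible in `k` it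
is a rigid Frobenius algebra with `Δ(e_n) = ∑_{m∈N} κ(m,m⁻¹n) e_m ⊗ e_{m⁻¹n}`,
`ε_B(e_n) = δ_{n,1}`, `m∘Δ = |N|·id` and `ε_B(1_B) = 1`. -/
theorem B_rigidFrobenius {k : Type*} [Field k] [IsAlgClosed k] {H : Type*} [Group H]
    [Finite H] [DecidableEq H] (ω : H → H → H → kˣ)
    (hω : IsCocycle ω) (hnorm : IsNormalized ω)
    (N : Subgroup H) (hN : N.Normal) [Fintype ↥N] [DecidableEq ↥N]
    (κ ε : H → H → kˣ) (hdata : ClassData ω N κ ε) :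
    ∃ (S : YDOn k ω (↥N →₀ k)) (mulB : (↥N →₀ k) ⊗[k] (↥N →₀ k) →ₗ[k] (↥N →₀ k)),
      IsBStruct ω N hN ε S ∧ IsBMul N κ mulB ∧
      -- the multiplication is a morphism in Z(Vect_H^ω)
      (∀ T : YDOn k ω ((↥N →₀ k) ⊗[k] (↥N →₀ k)),
          IsTensorStruct S S T → IsYDHom T S mulB) ∧
      -- the unit e_1 is a morphism in Z(Vect_H^ω) and B is unital
      (bGen k N 1 ∈ S.grading 1) ∧
      (∀ h : H, S.act h (bGen k N 1) = bGen k N 1) ∧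
      (∀ x : ↥N →₀ k, mulB (bGen k N 1 ⊗ₜ[k] x) = x ∧ mulB (x ⊗ₜ[k] bGen k N 1) = x) ∧
      -- associativity in the category
      (∀ a, IsAssocMap S S S a →
          mulB ∘ₗ TensorProduct.map mulB LinearMap.id
            = mulB ∘ₗ TensorProduct.map LinearMap.id mulB ∘ₗ a) ∧
      -- commutativity
      (∀ c, IsBraidingMap S S c → mulB ∘ₗ c = mulB) ∧
      -- connectedness
      Module.finrank k
        ↥(S.grading 1 ⊓ ⨅ h : H,
            LinearMap.eqLocus (S.act h) (LinearMap.id : (↥N →₀ k) →ₗ[k] _)) = 1 ∧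
      -- if |N| is invertible, B(N,κ,ε) is a rigid Frobenius algebra
      ((Nat.card ↥N : k) ≠ 0 →
        ∃ (ΔB : (↥N →₀ k) →ₗ[k] (↥N →₀ k) ⊗[k] (↥N →₀ k)) (εB : (↥N →₀ k) →ₗ[k] k),
          -- the comultiplication and counit formulas
          (∀ n : ↥N, ΔB (bGen k N n)
              = ∑ m : ↥N, ((κ ↑m (↑m⁻¹ * ↑n) : kˣ) : k)
                  • (bGen k N m ⊗ₜ[k] bGen k N (m⁻¹ * n))) ∧
          (∀ n : ↥N, εB (bGen k N n) = if n = 1 then 1 else 0) ∧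
          -- Δ and ε are morphisms in Z(Vect_H^ω)
          (∀ T : YDOn k ω ((↥N →₀ k) ⊗[k] (↥N →₀ k)),
              IsTensorStruct S S T → IsYDHom S T ΔB) ∧
          (∀ h : H, εB ∘ₗ S.act h = εB) ∧
          (∀ d : H, d ≠ 1 → ∀ v ∈ S.grading d, εB v = 0) ∧
          -- coassociativity and counitality
          (∀ a, IsAssocMap S S S a →
              a ∘ₗ TensorProduct.map ΔB LinearMap.id ∘ₗ ΔB
                = TensorProduct.map LinearMap.id ΔB ∘ₗ ΔB) ∧
          ((TensorProduct.lid k (↥N →₀ k)).toLinearMap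
              ∘ₗ TensorProduct.map εB LinearMap.id ∘ₗ ΔB = LinearMap.id) ∧
          ((TensorProduct.rid k (↥N →₀ k)).toLinearMap
              ∘ₗ TensorProduct.map LinearMap.id εB ∘ₗ ΔB = LinearMap.id) ∧
          -- the Frobenius compatibility conditions
          (∀ a a', IsAssocMap S S S a → IsAssocInvMap S S S a' →
              TensorProduct.map mulB LinearMap.id ∘ₗ a'
                  ∘ₗ TensorProduct.map LinearMap.id ΔB = ΔB ∘ₗ mulB ∧
              ΔB ∘ₗ mulB = TensorProduct.map LinearMap.id mulB ∘ₗ a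
                  ∘ₗ TensorProduct.map ΔB LinearMap.id) ∧
          -- specialness: m∘Δ = |N|·id and ε_B(1_B) = 1
          (mulB ∘ₗ ΔB = (Nat.card ↥N : k) • LinearMap.id) ∧
          εB (bGen k N 1) = 1) := by
  classical
  exact ⟨DWAux.SB N hN hdata hnorm, DWAux.mulB N κ,
    DWAux.isBStruct N hN hdata hnorm, DWAux.isBMul N,
    fun T hT => DWAux.mul_hom N hN hdata hnorm T hT,
    DWAux.unit_mem N hN hdata hnorm,
    DWAux.unit_fixed N hN hdata hnorm,
    DWAux.unit_mul N hdata hnorm,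
    fun a ha => DWAux.mul_assocB N hN hdata hnorm a ha,
    fun c hc => DWAux.mul_commB N hN hdata hnorm c hc,
    DWAux.connectedB N hN hdata hnorm,
    fun _ => ⟨DWAux.DeltaB N κ, DWAux.epsB N,
      fun n => DWAux.DeltaB_gen N n,
      fun n => DWAux.epsB_gen N n,
      fun T hT => DWAux.delta_hom N hN hdata hnorm T hT,
      fun h => DWAux.eps_hom N hN hdata hnorm h,
      fun d hd v hv => DWAux.eps_vanish N hN hdata hnorm d hd v hv,
      fun a ha => DWAux.coassocB N hN hdata hnorm a ha,
      DWAux.counit_left N hdata hnorm,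
      DWAux.counit_right N hdata hnorm,
      fun a a' ha ha' => ⟨DWAux.frob1B N hN hdata hnorm a' ha',
        DWAux.frob2B N hN hdata hnorm a ha⟩,
      DWAux.specialB N hdata hnorm,
      DWAux.epsB_one N hdata hnorm⟩⟩
end
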